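/- arXiv:2304.13470 — 3 statements merged into one kernel-verified Lean document; each statement's English description precedes it below -/
import Mathlib

section
/- Let C and D be C*-2-categories with D locally orthogonal projection complete. Then Fun(C,D) is locally orthogonal projection complete. More precisely: let F, G : C → D be *-2-functors, φ : F ⇒ G a *-2-transformation, and p : φ ⇛ φ a 2-modification with p_a² = p_a* = p_a for all 0-cells a. Choose, for each a, a 1-cell x_a ∈ D₁(F(a),G(a)) and an isometry ι_a ∈ D₂(x_a, φ_a) with ι_a* ι_a = id_{x_a} and ι_a ι_a* = p_a, and set x_X := (id_{G(X)} ⊠ ι_a*) ∘ φ_X ∘ (ι_b ⊠ id_{F(X)}) for each 1-cell X ∈ C₁(a,b). Then each x_X is unitary, x = (x_a, x_X) is a *-2-transformation F ⇒ G, and ι = (ι_a) is a 2-modification x ⇛ φ satisfying ι ∘ ι* = p and ι* ∘ ι = id_x. -/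
/-!
Self-contained background for formalizing results from
"Q-system completion of C*-2-categories of 2-functors".

We model a strict C*-2-category as a (Mathlib) bicategory which is `Bicategory.Strict`,
together with a `CStarStruct`: a star operation and a norm on 2-cells, compatible with
the vertical composition and the horizontal whiskerings.
-/

open CategoryTheory CategoryTheory.Bicategory

universe w₁ v₁ u₁ w₂ v₂ u₂

/-- A C*-structure on a bicategory: each hom-category is a C*-category.  We record the
star operation and the norm on 2-cells together with their compatibilities. -/
class CStarStruct (B : Type u₁) [Bicategory.{w₁, v₁} B] where
  star : ∀ {a b : B} {f g : a ⟶ b}, (f ⟶ g) → (g ⟶ f)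
  nrm : ∀ {a b : B} {f g : a ⟶ b}, (f ⟶ g) → ℝ
  star_star : ∀ {a b : B} {f g : a ⟶ b} (η : f ⟶ g), star (star η) = η
  star_id : ∀ {a b : B} (f : a ⟶ b), star (𝟙 f) = 𝟙 f
  star_comp : ∀ {a b : B} {f g h : a ⟶ b} (η : f ⟶ g) (θ : g ⟶ h),
    star (η ≫ θ) = star θ ≫ star η
  star_whiskerLeft : ∀ {a b c : B} (f : a ⟶ b) {g h : b ⟶ c} (η : g ⟶ h),
    star (f ◁ η) = f ◁ star η
  star_whiskerRight : ∀ {a b c : B} {f g : a ⟶ b} (η : f ⟶ g) (h : b ⟶ c),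
    star (η ▷ h) = star η ▷ h
  nrm_nonneg : ∀ {a b : B} {f g : a ⟶ b} (η : f ⟶ g), 0 ≤ nrm η
  nrm_star : ∀ {a b : B} {f g : a ⟶ b} (η : f ⟶ g), nrm (star η) = nrm η
  nrm_comp_le : ∀ {a b : B} {f g h : a ⟶ b} (η : f ⟶ g) (θ : g ⟶ h),
    nrm (η ≫ θ) ≤ nrm η * nrm θ
  nrm_cstar : ∀ {a b : B} {f g : a ⟶ b} (η : f ⟶ g),
    nrm (η ≫ star η) = nrm η * nrm η

section Basics

variable {B : Type u₁} [Bicategory.{w₁, v₁} B] [CStarStruct B]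

/-- The star (adjoint) of a 2-cell. -/
abbrev star2 {a b : B} {f g : a ⟶ b} (η : f ⟶ g) : g ⟶ f := CStarStruct.star η

/-- The norm of a 2-cell. -/
abbrev norm2 {a b : B} {f g : a ⟶ b} (η : f ⟶ g) : ℝ := CStarStruct.nrm η

/-- A 2-cell `u : f ⟶ g` is unitary if `u u* = id` and `u* u = id`
(composites written diagrammatically). -/
def IsUnitary {a b : B} {f g : a ⟶ b} (u : f ⟶ g) : Prop :=
  u ≫ star2 u = 𝟙 f ∧ star2 u ≫ u = 𝟙 g

/-- A projection 2-cell: `p² = p = p*`. -/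
def IsProjection {a b : B} {f : a ⟶ b} (p : f ⟶ f) : Prop :=
  p ≫ p = p ∧ star2 p = p

end Basics

/-- A C*-2-category is locally orthogonal projection complete if every projection
2-cell `p` on a 1-cell `f` splits as `p = v v*` with `v` an isometry (`v* v = id`). -/
def LocProjComplete (B : Type u₁) [Bicategory.{w₁, v₁} B] [CStarStruct B] : Prop :=
  ∀ {a b : B} (f : a ⟶ b) (p : f ⟶ f), IsProjection p →
    ∃ (g : a ⟶ b) (v : g ⟶ f), v ≫ star2 v = 𝟙 g ∧ star2 v ≫ v = p

section QSystems

variable {B : Type u₁} [Bicategory.{w₁, v₁} B] [CStarStruct B]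

/-- The Q-system axioms for a 1-cell `Q : b ⟶ b` with multiplication `m` and unit `i`:
associativity, (left and right) unitality, the Frobenius condition (both versions)
and separability. -/
def IsQSystem {b : B} (Q : b ⟶ b) (m : Q ≫ Q ⟶ Q) (i : 𝟙 b ⟶ Q) : Prop :=
  ((m ▷ Q) ≫ m = (α_ Q Q Q).hom ≫ (Q ◁ m) ≫ m) ∧
  ((i ▷ Q) ≫ m = (λ_ Q).hom) ∧
  ((Q ◁ i) ≫ m = (ρ_ Q).hom) ∧
  (m ≫ star2 m = (star2 m ▷ Q) ≫ (α_ Q Q Q).hom ≫ (Q ◁ m)) ∧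
  (m ≫ star2 m = (Q ◁ star2 m) ≫ (α_ Q Q Q).inv ≫ (m ▷ Q)) ∧
  (star2 m ≫ m = 𝟙 Q)

/-- `(x, xb)` is a dual pair with evaluation `ε` and coevaluation `η` satisfying the
zig-zag identities, and the duality is unitarily separable: `ε ∘ ε* = id`. -/
def IsUnitarySepDual {e c : B} (x : e ⟶ c) (xb : c ⟶ e)
    (eps : xb ≫ x ⟶ 𝟙 c) (η : 𝟙 e ⟶ x ≫ xb) : Prop :=
  ((λ_ x).inv ≫ (η ▷ x) ≫ (α_ x xb x).hom ≫ (x ◁ eps) ≫ (ρ_ x).hom = 𝟙 x) ∧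
  ((ρ_ xb).inv ≫ (xb ◁ η) ≫ (α_ xb x xb).inv ≫ (eps ▷ xb) ≫ (λ_ xb).hom = 𝟙 xb) ∧
  (star2 eps ≫ eps = 𝟙 (𝟙 c))

/-- The canonical multiplication `id ⊠ ε ⊠ id` on the 1-cell `x ≫ xb` determined
by a dual pair. -/
def dualMult {e c : B} (x : e ⟶ c) (xb : c ⟶ e) (eps : xb ≫ x ⟶ 𝟙 c) :
    (x ≫ xb) ≫ (x ≫ xb) ⟶ x ≫ xb :=
  (α_ x xb (x ≫ xb)).hom ≫ (x ◁ ((α_ xb x xb).inv ≫ (eps ▷ xb) ≫ (λ_ xb).hom))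

/-- The canonical comultiplication `id ⊠ ε* ⊠ id` on the 1-cell `x ≫ xb` determined
by a dual pair. -/
def comultOf {e c : B} (x : e ⟶ c) (xb : c ⟶ e) (eps : xb ≫ x ⟶ 𝟙 c) :
    x ≫ xb ⟶ (x ≫ xb) ≫ (x ≫ xb) :=
  (x ◁ ((λ_ xb).inv ≫ (star2 eps ▷ xb) ≫ (α_ xb x xb).hom)) ≫ (α_ x xb (x ≫ xb)).inv

/-- `u` is an isomorphism of Q-systems `(Q, m, i) ≅ (Q', m', i')`: a unitary 2-cell
intertwining the multiplications and the units. -/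
def IsQSysIso {b : B} {Q Q' : b ⟶ b} (m : Q ≫ Q ⟶ Q) (i : 𝟙 b ⟶ Q)
    (m' : Q' ≫ Q' ⟶ Q') (i' : 𝟙 b ⟶ Q') (u : Q ⟶ Q') : Prop :=
  IsUnitary u ∧ (m ≫ u = ((u ▷ Q) ≫ (Q' ◁ u)) ≫ m') ∧ (i ≫ u = i')

/-- A Q-system `(Q, m, i)` splits if it is isomorphic, as a Q-system, to `X ⊠ X̄`
for a 1-cell `X` admitting a unitarily separable dual. -/
def QSystemSplits {b : B} (Q : b ⟶ b) (m : Q ≫ Q ⟶ Q) (i : 𝟙 b ⟶ Q) : Prop :=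
  ∃ (c : B) (x : b ⟶ c) (xb : c ⟶ b) (eps : xb ≫ x ⟶ 𝟙 c) (η : 𝟙 b ⟶ x ≫ xb),
    IsUnitarySepDual x xb eps η ∧
    ∃ u : Q ⟶ x ≫ xb, IsQSysIso m i (dualMult x xb eps) η u

end QSystems

/-- A C*-2-category is Q-system complete iff every Q-system in it splits
(by [CPJP, Theorem 3.36] this is equivalent to the canonical inclusion into the
Q-system completion being a *-equivalence). -/
def QSystemComplete (B : Type u₁) [Bicategory.{w₁, v₁} B] [CStarStruct B] : Prop :=
  ∀ (b : B) (Q : b ⟶ b) (m : Q ≫ Q ⟶ Q) (i : 𝟙 b ⟶ Q),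
    IsQSystem Q m i → QSystemSplits Q m i

/-! ### The C*-2-category `Fun(C, D)` of *-2-functors -/

/-- The data of a 2-functor between bicategories: action on 0-, 1-, 2-cells,
tensorators and unitors. -/
structure TwoFunctorData (C : Type u₁) (D : Type u₂)
    [Bicategory.{w₁, v₁} C] [Bicategory.{w₂, v₂} D] where
  obj : C → D
  map : ∀ {a b : C}, (a ⟶ b) → (obj a ⟶ obj b)
  map2 : ∀ {a b : C} {X Y : a ⟶ b}, (X ⟶ Y) → (map X ⟶ map Y)
  tensorator : ∀ {a b c : C} (X : a ⟶ b) (Y : b ⟶ c), map X ≫ map Y ⟶ map (X ≫ Y)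
  unitor : ∀ a : C, 𝟙 (obj a) ⟶ map (𝟙 a)

section Fun

variable {C : Type u₁} {D : Type u₂}
variable [Bicategory.{w₁, v₁} C] [Bicategory.Strict C] [CStarStruct C]
variable [Bicategory.{w₂, v₂} D] [Bicategory.Strict D] [CStarStruct D]

/-- `F` is a *-2-functor: functorial on hom-categories, star-preserving, with unitary
natural tensorators and unitors satisfying the associativity and unitality coherences. -/
def IsStarTwoFunctor (F : TwoFunctorData C D) : Prop :=
  (∀ {a b : C} (X : a ⟶ b), F.map2 (𝟙 X) = 𝟙 (F.map X)) ∧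
  (∀ {a b : C} {X Y Z : a ⟶ b} (f : X ⟶ Y) (g : Y ⟶ Z),
      F.map2 (f ≫ g) = F.map2 f ≫ F.map2 g) ∧
  (∀ {a b : C} {X Y : a ⟶ b} (f : X ⟶ Y), F.map2 (star2 f) = star2 (F.map2 f)) ∧
  (∀ {a b c : C} (X : a ⟶ b) (Y : b ⟶ c), IsUnitary (F.tensorator X Y)) ∧
  (∀ a : C, IsUnitary (F.unitor a)) ∧
  (∀ {a b c : C} {X X' : a ⟶ b} {Y Y' : b ⟶ c} (f : X ⟶ X') (g : Y ⟶ Y'),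
      ((F.map2 f ▷ F.map Y) ≫ (F.map X' ◁ F.map2 g)) ≫ F.tensorator X' Y'
        = F.tensorator X Y ≫ F.map2 ((f ▷ Y) ≫ (X' ◁ g))) ∧
  (∀ {a b c d : C} (X : a ⟶ b) (Y : b ⟶ c) (Z : c ⟶ d),
      (F.tensorator X Y ▷ F.map Z) ≫ F.tensorator (X ≫ Y) Z ≫ F.map2 (α_ X Y Z).hom
        = (α_ (F.map X) (F.map Y) (F.map Z)).hom ≫ (F.map X ◁ F.tensorator Y Z)
            ≫ F.tensorator X (Y ≫ Z)) ∧
  (∀ {a b : C} (X : a ⟶ b),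
      (F.unitor a ▷ F.map X) ≫ F.tensorator (𝟙 a) X ≫ F.map2 (λ_ X).hom
        = (λ_ (F.map X)).hom) ∧
  (∀ {a b : C} (X : a ⟶ b),
      (F.map X ◁ F.unitor b) ≫ F.tensorator X (𝟙 b) ≫ F.map2 (ρ_ X).hom
        = (ρ_ (F.map X)).hom)

/-- The data of a 2-transformation `φ : F ⇒ G`: 1-cells `φ_a : F(a) ⟶ G(a)` and
2-cells `φ_X : F(X) ⊠ φ_b ⟶ φ_a ⊠ G(X)` (written diagrammatically). -/
structure TransfData (F G : TwoFunctorData C D) where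
  app : ∀ a : C, F.obj a ⟶ G.obj a
  natur : ∀ {a b : C} (X : a ⟶ b), F.map X ≫ app b ⟶ app a ≫ G.map X

/-- `φ` is a *-2-transformation: each `φ_X` is unitary, natural in `X`, and coherent
with the tensorators and unitors of `F` and `G`. -/
def IsStarTwoTransf {F G : TwoFunctorData C D} (φ : TransfData F G) : Prop :=
  (∀ {a b : C} (X : a ⟶ b), IsUnitary (φ.natur X)) ∧
  (∀ {a b : C} {X Y : a ⟶ b} (f : X ⟶ Y),
      (F.map2 f ▷ φ.app b) ≫ φ.natur Y = φ.natur X ≫ (φ.app a ◁ G.map2 f)) ∧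
  (∀ {a b c : C} (X : a ⟶ b) (Y : b ⟶ c),
      (F.tensorator X Y ▷ φ.app c) ≫ φ.natur (X ≫ Y)
        = (α_ (F.map X) (F.map Y) (φ.app c)).hom ≫ (F.map X ◁ φ.natur Y)
          ≫ (α_ (F.map X) (φ.app b) (G.map Y)).inv ≫ (φ.natur X ▷ G.map Y)
          ≫ (α_ (φ.app a) (G.map X) (G.map Y)).hom ≫ (φ.app a ◁ G.tensorator X Y)) ∧
  (∀ a : C,
      (F.unitor a ▷ φ.app a) ≫ φ.natur (𝟙 a)
        = (λ_ (φ.app a)).hom ≫ (ρ_ (φ.app a)).inv ≫ (φ.app a ◁ G.unitor a))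

/-- The data of a 2-modification: a family of 2-cells `η_a : φ_a ⟶ ψ_a`. -/
abbrev ModifData {F G : TwoFunctorData C D} (φ ψ : TransfData F G) :=
  ∀ a : C, φ.app a ⟶ ψ.app a

/-- `η` is a 2-modification `φ ⇛ ψ`: uniformly bounded components intertwining the
half-braidings `φ_X`, `ψ_X`. -/
def IsModification {F G : TwoFunctorData C D} (φ ψ : TransfData F G)
    (η : ModifData φ ψ) : Prop :=
  (∃ M : ℝ, ∀ a : C, norm2 (η a) ≤ M) ∧
  (∀ {a b : C} (X : a ⟶ b),
      (F.map X ◁ η b) ≫ ψ.natur X = φ.natur X ≫ (η a ▷ G.map X))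

/-- Horizontal composition of 2-transformations (the tensor product `ψ ⊗ φ` of
1-cells of `Fun(C,D)`, written diagrammatically). -/
def hcompT {F G H : TwoFunctorData C D} (φ : TransfData F G) (χ : TransfData G H) :
    TransfData F H where
  app a := φ.app a ≫ χ.app a
  natur {a b} X :=
    (α_ (F.map X) (φ.app b) (χ.app b)).inv ≫ (φ.natur X ▷ χ.app b)
      ≫ (α_ (φ.app a) (G.map X) (χ.app b)).hom ≫ (φ.app a ◁ χ.natur X)
      ≫ (α_ (φ.app a) (χ.app a) (H.map X)).inv

/-- The identity 2-transformation `1_F`. -/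
def idT (F : TwoFunctorData C D) : TransfData F F where
  app a := 𝟙 (F.obj a)
  natur {a b} X := (ρ_ (F.map X)).hom ≫ (λ_ (F.map X)).inv

/-- A Q-system in `End(F) ⊆ Fun(C,D)`: a *-2-transformation `ψ : F ⇒ F` with
multiplication and unit 2-modifications whose components form Q-systems in `D`. -/
def IsFunQSystem (F : TwoFunctorData C D) (ψ : TransfData F F)
    (m : ModifData (hcompT ψ ψ) ψ) (i : ModifData (idT F) ψ) : Prop :=
  IsStarTwoTransf ψ ∧ IsModification (hcompT ψ ψ) ψ m ∧ IsModification (idT F) ψ i ∧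
  ∀ a : C, IsQSystem (ψ.app a) (m a) (i a)

/-- A Q-system `(ψ, m, i)` in `End(F)` splits in `Fun(C,D)`: there are a *-2-functor `G`,
*-2-transformations `φ : F ⇒ G`, `φ̄ : G ⇒ F` forming a unitarily separable dual pair
(with evaluation and coevaluation 2-modifications), and a unitary 2-modification
`γ : φ̄ ⊗ φ ⇛ ψ` which is an isomorphism of Q-systems. -/
def FunQSystemSplits (F : TwoFunctorData C D) (ψ : TransfData F F)
    (m : ModifData (hcompT ψ ψ) ψ) (i : ModifData (idT F) ψ) : Prop :=
  ∃ (G : TwoFunctorData C D), IsStarTwoFunctor G ∧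
  ∃ (φ : TransfData F G) (φb : TransfData G F),
    IsStarTwoTransf φ ∧ IsStarTwoTransf φb ∧
  ∃ (ev : ∀ a : C, φb.app a ≫ φ.app a ⟶ 𝟙 (G.obj a))
    (coev : ∀ a : C, 𝟙 (F.obj a) ⟶ φ.app a ≫ φb.app a),
    IsModification (hcompT φb φ) (idT G) ev ∧
    IsModification (idT F) (hcompT φ φb) coev ∧
    (∀ a : C, IsUnitarySepDual (φ.app a) (φb.app a) (ev a) (coev a)) ∧
    ∃ (γ : ∀ a : C, φ.app a ≫ φb.app a ⟶ ψ.app a),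
      IsModification (hcompT φ φb) ψ γ ∧
      ∀ a : C, IsQSysIso (dualMult (φ.app a) (φb.app a) (ev a)) (coev a)
        (m a) (i a) (γ a)

end Fun

/-- The C*-2-category `Fun(C,D)` is Q-system complete: every Q-system in it splits. -/
def FunQSystemComplete (C : Type u₁) (D : Type u₂)
    [Bicategory.{w₁, v₁} C] [Bicategory.Strict C] [CStarStruct C]
    [Bicategory.{w₂, v₂} D] [Bicategory.Strict D] [CStarStruct D] : Prop :=
  ∀ (F : TwoFunctorData C D), IsStarTwoFunctor F →
  ∀ (ψ : TransfData F F) (m : ModifData (hcompT ψ ψ) ψ) (i : ModifData (idT F) ψ),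
    IsFunQSystem F ψ m i → FunQSystemSplits F ψ m i

/-- The C*-2-category `Fun(C,D)` is locally orthogonal projection complete: every
projection 2-modification splits by an isometric 2-modification. -/
def FunLocProjComplete (C : Type u₁) (D : Type u₂)
    [Bicategory.{w₁, v₁} C] [Bicategory.Strict C] [CStarStruct C]
    [Bicategory.{w₂, v₂} D] [Bicategory.Strict D] [CStarStruct D] : Prop :=
  ∀ (F G : TwoFunctorData C D), IsStarTwoFunctor F → IsStarTwoFunctor G →
  ∀ (φ : TransfData F G), IsStarTwoTransf φ →
  ∀ (p : ModifData φ φ), IsModification φ φ p → (∀ a : C, IsProjection (p a)) →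
  ∃ (χ : TransfData F G), IsStarTwoTransf χ ∧
  ∃ (v : ModifData χ φ), IsModification χ φ v ∧
    (∀ a : C, v a ≫ star2 (v a) = 𝟙 (χ.app a)) ∧ (∀ a : C, star2 (v a) ≫ v a = p a)

section AuxLemmas

variable {B : Type u₁} [Bicategory.{w₁, v₁} B] [CStarStruct B]

/-- In a C*-2-category, the norm of an identity 2-cell is at most `1`. -/
lemma norm2_id_le_one {a b : B} (f : a ⟶ b) : norm2 (𝟙 f) ≤ 1 := by
  have h := CStarStruct.nrm_cstar (𝟙 f)
  rw [CStarStruct.star_id, Category.comp_id] at h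
  have h0 := CStarStruct.nrm_nonneg (𝟙 f)
  nlinarith [h, h0]

/-- In a C*-2-category, the norm of an isometry is at most `1`. -/
lemma norm2_isometry_le_one {a b : B} {f g : a ⟶ b} (v : f ⟶ g)
    (hv : v ≫ star2 v = 𝟙 f) : norm2 v ≤ 1 := by
  have h := CStarStruct.nrm_cstar v
  rw [hv] at h
  have h1 := norm2_id_le_one f
  have h0 := CStarStruct.nrm_nonneg v
  nlinarith

/-- The norm of the star of an isometry is at most `1`. -/
lemma norm2_star_isometry_le_one {a b : B} {f g : a ⟶ b} (v : f ⟶ g)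
    (hv : v ≫ star2 v = 𝟙 f) : norm2 (star2 v) ≤ 1 := by
  have h : norm2 (star2 v) = norm2 v := CStarStruct.nrm_star v
  rw [h]
  exact norm2_isometry_le_one v hv

end AuxLemmas

section MainAux

variable {C : Type u₁} {D : Type u₂}
variable [Bicategory.{w₁, v₁} C] [Bicategory.Strict C] [CStarStruct C]
variable [Bicategory.{w₂, v₂} D] [Bicategory.Strict D] [CStarStruct D]

/-- The core of Statement 2: given a projection 2-modification `p` on a
*-2-transformation `φ` together with pointwise splittings `ι_a`, the compressed
half-braidings are unitary, assemble into a *-2-transformation, and `ι`, `ι*` are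
2-modifications. -/
lemma funCD_splitting_aux
    (F G : TwoFunctorData C D)
    (φ : TransfData F G) (hφ : IsStarTwoTransf φ)
    (p : ModifData φ φ) (hp : IsModification φ φ p)
    (x : ∀ a : C, F.obj a ⟶ G.obj a)
    (ι : ∀ a : C, x a ⟶ φ.app a)
    (hι_isom : ∀ a : C, ι a ≫ star2 (ι a) = 𝟙 (x a))
    (hι_proj : ∀ a : C, star2 (ι a) ≫ ι a = p a) :
    (∀ {a b : C} (X : a ⟶ b),
        IsUnitary ((F.map X ◁ ι b) ≫ φ.natur X ≫ (star2 (ι a) ▷ G.map X))) ∧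
    IsStarTwoTransf
      ({ app := x,
         natur := fun {a b} X =>
           (F.map X ◁ ι b) ≫ φ.natur X ≫ (star2 (ι a) ▷ G.map X) } :
        TransfData F G) ∧
    IsModification
      ({ app := x,
         natur := fun {a b} X =>
           (F.map X ◁ ι b) ≫ φ.natur X ≫ (star2 (ι a) ▷ G.map X) } :
        TransfData F G) φ ι ∧
    IsModification φ
      ({ app := x,
         natur := fun {a b} X =>
           (F.map X ◁ ι b) ≫ φ.natur X ≫ (star2 (ι a) ▷ G.map X) } :
        TransfData F G) (fun a => star2 (ι a)) := by
  -- basic consequences of the isometry relations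
  have hιp : ∀ a : C, ι a ≫ p a = ι a := fun a => by
    rw [← hι_proj, ← Category.assoc, hι_isom, Category.id_comp]
  have hpι : ∀ a : C, p a ≫ star2 (ι a) = star2 (ι a) := fun a => by
    rw [← hι_proj, Category.assoc, hι_isom, Category.comp_id]
  -- the modification intertwining relation for `p`
  have hpmod : ∀ {a b : C} (X : a ⟶ b),
      (F.map X ◁ p b) ≫ φ.natur X = φ.natur X ≫ (p a ▷ G.map X) := hp.2
  -- unitarity of the compressed half-braidings
  have hunit : ∀ {a b : C} (X : a ⟶ b),
      IsUnitary ((F.map X ◁ ι b) ≫ φ.natur X ≫ (star2 (ι a) ▷ G.map X)) := by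
    intro a b X
    constructor
    · simp only [CStarStruct.star_comp, CStarStruct.star_whiskerLeft,
        CStarStruct.star_whiskerRight, CStarStruct.star_star, Category.assoc]
      slice_lhs 3 4 => rw [← Bicategory.comp_whiskerRight, hι_proj a]
      slice_lhs 2 3 => rw [← hpmod X]
      slice_lhs 1 2 => rw [← Bicategory.whiskerLeft_comp, hιp b]
      slice_lhs 2 3 => rw [(hφ.1 X).1]
      simp [← Bicategory.whiskerLeft_comp, hι_isom b]
    · simp only [CStarStruct.star_comp, CStarStruct.star_whiskerLeft,
        CStarStruct.star_whiskerRight, CStarStruct.star_star, Category.assoc]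
      slice_lhs 3 4 => rw [← Bicategory.whiskerLeft_comp, hι_proj b]
      slice_lhs 3 4 => rw [hpmod X]
      slice_lhs 2 3 => rw [(hφ.1 X).2]
      simp only [Category.id_comp]
      slice_lhs 2 3 => rw [← Bicategory.comp_whiskerRight, hpι a]
      simp [← Bicategory.comp_whiskerRight, hι_isom a]
  refine ⟨hunit, ⟨fun {a b} X => hunit X, ?_, ?_, ?_⟩, ⟨⟨1, fun a =>
      norm2_isometry_le_one (ι a) (hι_isom a)⟩, ?_⟩, ⟨⟨1, fun a =>
      norm2_star_isometry_le_one (ι a) (hι_isom a)⟩, ?_⟩⟩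
  · -- naturality of the compressed half-braidings
    intro a b X Y f
    slice_lhs 1 2 => rw [← whisker_exchange]
    slice_lhs 2 3 => rw [hφ.2.1 f]
    slice_lhs 3 4 => rw [whisker_exchange]
    simp [Category.assoc]
  · -- tensorator coherence
    intro a b c X Y
    slice_lhs 1 2 => rw [← whisker_exchange]
    slice_lhs 2 3 => rw [hφ.2.2.1 X Y]
    simp only [Category.assoc]
    slice_lhs 7 8 => rw [whisker_exchange]
    slice_lhs 6 7 => rw [← associator_naturality_left]
    slice_lhs 1 2 => rw [associator_naturality_right]
    -- now massage the right-hand side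
    simp only [Bicategory.whiskerLeft_comp, Bicategory.comp_whiskerRight,
      Category.assoc]
    slice_rhs 4 5 => rw [associator_inv_naturality_middle]
    simp only [Category.assoc]
    slice_rhs 5 6 => rw [← Bicategory.comp_whiskerRight, ← Bicategory.whiskerLeft_comp,
      hι_proj b]
    simp only [Category.assoc]
    slice_rhs 4 5 => rw [← associator_inv_naturality_middle]
    simp only [Category.assoc]
    slice_rhs 3 4 => rw [← Bicategory.whiskerLeft_comp, ← hpmod Y,
      Bicategory.whiskerLeft_comp]
    simp only [Category.assoc]
    slice_rhs 2 3 => rw [← Bicategory.whiskerLeft_comp, ← Bicategory.whiskerLeft_comp,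
      hιp c]
    simp [Category.assoc]
  · -- unitor coherence
    intro a
    slice_lhs 1 2 => rw [← whisker_exchange]
    slice_lhs 2 3 => rw [hφ.2.2.2 a]
    slice_lhs 4 5 => rw [whisker_exchange]
    slice_lhs 1 2 => rw [leftUnitor_naturality]
    slice_lhs 3 4 => rw [← rightUnitor_inv_naturality]
    slice_lhs 2 3 => rw [hι_isom a]
    simp [Category.assoc]
  · -- `ι` is a modification
    intro a b X
    symm
    slice_lhs 3 4 => rw [← Bicategory.comp_whiskerRight, hι_proj a]
    slice_lhs 2 3 => rw [← hpmod X]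
    slice_lhs 1 2 => rw [← Bicategory.whiskerLeft_comp, hιp b]
  · -- `ι*` is a modification
    intro a b X
    slice_lhs 1 2 => rw [← Bicategory.whiskerLeft_comp, hι_proj b]
    slice_lhs 1 2 => rw [hpmod X]
    slice_lhs 2 3 => rw [← Bicategory.comp_whiskerRight, hpι a]

end MainAux

/-- If `D` is locally orthogonal projection complete then so is
`Fun(C, D)`.  More precisely: given *-2-functors `F`, `G`, a *-2-transformation
`φ : F ⇒ G` and a projection 2-modification `p : φ ⇛ φ`, and choices of 1-cells
`x_a` and isometries `ι_a : x_a ⟶ φ_a` with `ι_a* ι_a = id` and `ι_a ι_a* = p_a`,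
the family `x_X := (id ⊠ ι_a*) ∘ φ_X ∘ (ι_b ⊠ id)` consists of unitaries, `x`
is a *-2-transformation `F ⇒ G`, and `ι` is a 2-modification `x ⇛ φ` with
`ι ∘ ι* = p` and `ι* ∘ ι = id_x`. -/
theorem funCD_locProjComplete
    (C : Type u₁) (D : Type u₂)
    [Bicategory.{w₁, v₁} C] [Bicategory.Strict C] [CStarStruct C]
    [Bicategory.{w₂, v₂} D] [Bicategory.Strict D] [CStarStruct D]
    (hD : LocProjComplete D)
    (F G : TwoFunctorData C D) (hF : IsStarTwoFunctor F) (hG : IsStarTwoFunctor G)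
    (φ : TransfData F G) (hφ : IsStarTwoTransf φ)
    (p : ModifData φ φ) (hp : IsModification φ φ p)
    (hproj : ∀ a : C, IsProjection (p a))
    (x : ∀ a : C, F.obj a ⟶ G.obj a)
    (ι : ∀ a : C, x a ⟶ φ.app a)
    (hι_isom : ∀ a : C, ι a ≫ star2 (ι a) = 𝟙 (x a))
    (hι_proj : ∀ a : C, star2 (ι a) ≫ ι a = p a) :
    FunLocProjComplete C D ∧
    (∀ {a b : C} (X : a ⟶ b),
        IsUnitary ((F.map X ◁ ι b) ≫ φ.natur X ≫ (star2 (ι a) ▷ G.map X))) ∧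
    IsStarTwoTransf
      ({ app := x,
         natur := fun {a b} X =>
           (F.map X ◁ ι b) ≫ φ.natur X ≫ (star2 (ι a) ▷ G.map X) } :
        TransfData F G) ∧
    IsModification
      ({ app := x,
         natur := fun {a b} X =>
           (F.map X ◁ ι b) ≫ φ.natur X ≫ (star2 (ι a) ▷ G.map X) } :
        TransfData F G) φ ι ∧
    IsModification φ
      ({ app := x,
         natur := fun {a b} X =>
           (F.map X ◁ ι b) ≫ φ.natur X ≫ (star2 (ι a) ▷ G.map X) } :
        TransfData F G) (fun a => star2 (ι a)) := by
  have haux := funCD_splitting_aux F G φ hφ p hp x ι hι_isom hι_proj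
  refine ⟨?_, haux.1, haux.2.1, haux.2.2.1, haux.2.2.2⟩
  intro F' G' _ _ φ' hφ' p' hp' hproj'
  choose x' ι' h1 h2 using fun a => hD (φ'.app a) (p' a) (hproj' a)
  have haux' := funCD_splitting_aux F' G' φ' hφ' p' hp' x' ι' h1 h2
  exact ⟨⟨x', fun {a b} X =>
      (F'.map X ◁ ι' b) ≫ φ'.natur X ≫ (star2 (ι' a) ▷ G'.map X)⟩,
    haux'.2.1, ι', haux'.2.2.1, h1, h2⟩
end

section
/- In the standing setup, for every 2-cell f ∈ C₂(X,Y) between 1-cells X, Y ∈ C₁(a,b) one has (id_{x_b} ⊠ F(f) ⊠ id_{x̄_a}) ∘ p_X = p_Y ∘ (id_{x_b} ⊠ F(f) ⊠ id_{x̄_a}), i.e. the projections p_X are natural in X. -/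
/-!
Self-contained background for formalizing results from
"Q-system completion of C*-2-categories of 2-functors".

We model a strict C*-2-category as a (Mathlib) bicategory which is `Bicategory.Strict`,
together with a `CStarStruct`: a star operation and a norm on 2-cells, compatible with
the vertical composition and the horizontal whiskerings.
-/

open CategoryTheory CategoryTheory.Bicategory

universe w₁ v₁ u₁ w₂ v₂ u₂

/-! ### The standing setup

`C`, `D` are strict C*-2-categories, `D` is Q-system complete, `F : C → D` is a
*-2-functor and `(ψ, m, i)` is a Q-system in `End_{Fun(C,D)}(F)`; for each 0-cell `a`
of `C` we fix a splitting of the Q-system `ψ_a` in `D`: a 0-cell `c_a`, a 1-cell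
`x_a : F(a) ⟶ c_a` with unitarily separable dual `x̄_a`, evaluation `ε_a`,
coevaluation `η_a`, and a unitary `γ⁽ᵃ⁾ : x̄_a ⊠ x_a ⟶ ψ_a` intertwining the
multiplications and units. -/
structure Setup (C : Type u₁) (D : Type u₂)
    [Bicategory.{w₁, v₁} C] [Bicategory.Strict C] [CStarStruct C]
    [Bicategory.{w₂, v₂} D] [Bicategory.Strict D] [CStarStruct D] where
  locC : LocProjComplete C
  locD : LocProjComplete D
  complD : QSystemComplete D
  F : TwoFunctorData C D
  hF : IsStarTwoFunctor F
  ψ : TransfData F F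
  hψ : IsStarTwoTransf ψ
  m : ModifData (hcompT ψ ψ) ψ
  i : ModifData (idT F) ψ
  hm : IsModification (hcompT ψ ψ) ψ m
  hi : IsModification (idT F) ψ i
  hQ : ∀ a : C, IsQSystem (ψ.app a) (m a) (i a)
  cc : C → D
  x : ∀ a : C, F.obj a ⟶ cc a
  xb : ∀ a : C, cc a ⟶ F.obj a
  eps : ∀ a : C, xb a ≫ x a ⟶ 𝟙 (cc a)
  η : ∀ a : C, 𝟙 (F.obj a) ⟶ x a ≫ xb a
  hdual : ∀ a : C, IsUnitarySepDual (x a) (xb a) (eps a) (η a)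
  γ : ∀ a : C, x a ≫ xb a ⟶ ψ.app a
  hγu : ∀ a : C, IsUnitary (γ a)
  hγm : ∀ a : C,
    dualMult (x a) (xb a) (eps a) ≫ γ a
      = ((γ a ▷ (x a ≫ xb a)) ≫ (ψ.app a ◁ γ a)) ≫ m a
  hγi : ∀ a : C, η a ≫ γ a = i a

namespace Setup

variable {C : Type u₁} {D : Type u₂}
variable [Bicategory.{w₁, v₁} C] [Bicategory.Strict C] [CStarStruct C]
variable [Bicategory.{w₂, v₂} D] [Bicategory.Strict D] [CStarStruct D]

/-- The 2-cell `p_X ∈ End(x_b ⊠ F(X) ⊠ x̄_a)`, namely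
`(ε_b ⊠ id) ∘ (id ⊠ γ⁽ᵇ⁾* ⊠ id) ∘ (id ⊠ ψ_X* ⊠ id) ∘ (id ⊠ γ⁽ᵃ⁾ ⊠ id) ∘ (id ⊠ ε_a*)`. -/
def p (S : Setup C D) {a b : C} (X : a ⟶ b) :
    S.xb a ≫ S.F.map X ≫ S.x b ⟶ S.xb a ≫ S.F.map X ≫ S.x b :=
  (λ_ (S.xb a ≫ S.F.map X ≫ S.x b)).inv
    ≫ (star2 (S.eps a) ▷ (S.xb a ≫ S.F.map X ≫ S.x b))
    ≫ (α_ (S.xb a) (S.x a) (S.xb a ≫ S.F.map X ≫ S.x b)).hom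
    ≫ (S.xb a ◁ (α_ (S.x a) (S.xb a) (S.F.map X ≫ S.x b)).inv)
    ≫ (S.xb a ◁ (S.γ a ▷ (S.F.map X ≫ S.x b)))
    ≫ (S.xb a ◁ (α_ (S.ψ.app a) (S.F.map X) (S.x b)).inv)
    ≫ (S.xb a ◁ (star2 (S.ψ.natur X) ▷ S.x b))
    ≫ (S.xb a ◁ (α_ (S.F.map X) (S.ψ.app b) (S.x b)).hom)
    ≫ (S.xb a ◁ (S.F.map X ◁ (star2 (S.γ b) ▷ S.x b)))
    ≫ (S.xb a ◁ (S.F.map X ◁ (α_ (S.x b) (S.xb b) (S.x b)).hom))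
    ≫ (S.xb a ◁ (S.F.map X ◁ (S.x b ◁ S.eps b)))
    ≫ (S.xb a ◁ (S.F.map X ◁ (ρ_ (S.x b)).hom))

/-- The 2-cell `p_{X,Y} ∈ End(x_b ⊠ F(X) ⊠ F(Y) ⊠ x̄_c)` obtained like `p_X` but
passing `ψ` through both `F(X)` and `F(Y)`. -/
def p2 (S : Setup C D) {a b c : C} (X : a ⟶ b) (Y : b ⟶ c) :
    S.xb a ≫ S.F.map X ≫ S.F.map Y ≫ S.x c
      ⟶ S.xb a ≫ S.F.map X ≫ S.F.map Y ≫ S.x c :=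
  (λ_ (S.xb a ≫ S.F.map X ≫ S.F.map Y ≫ S.x c)).inv
    ≫ (star2 (S.eps a) ▷ (S.xb a ≫ S.F.map X ≫ S.F.map Y ≫ S.x c))
    ≫ (α_ (S.xb a) (S.x a) (S.xb a ≫ S.F.map X ≫ S.F.map Y ≫ S.x c)).hom
    ≫ (S.xb a ◁ (α_ (S.x a) (S.xb a) (S.F.map X ≫ S.F.map Y ≫ S.x c)).inv)
    ≫ (S.xb a ◁ (S.γ a ▷ (S.F.map X ≫ S.F.map Y ≫ S.x c)))
    ≫ (S.xb a ◁ (α_ (S.ψ.app a) (S.F.map X) (S.F.map Y ≫ S.x c)).inv)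
    ≫ (S.xb a ◁ (star2 (S.ψ.natur X) ▷ (S.F.map Y ≫ S.x c)))
    ≫ (S.xb a ◁ (α_ (S.F.map X) (S.ψ.app b) (S.F.map Y ≫ S.x c)).hom)
    ≫ (S.xb a ◁ (S.F.map X ◁ (α_ (S.ψ.app b) (S.F.map Y) (S.x c)).inv))
    ≫ (S.xb a ◁ (S.F.map X ◁ (star2 (S.ψ.natur Y) ▷ S.x c)))
    ≫ (S.xb a ◁ (S.F.map X ◁ (α_ (S.F.map Y) (S.ψ.app c) (S.x c)).hom))
    ≫ (S.xb a ◁ (S.F.map X ◁ (S.F.map Y ◁ (star2 (S.γ c) ▷ S.x c))))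
    ≫ (S.xb a ◁ (S.F.map X ◁ (S.F.map Y ◁ (α_ (S.x c) (S.xb c) (S.x c)).hom)))
    ≫ (S.xb a ◁ (S.F.map X ◁ (S.F.map Y ◁ (S.x c ◁ S.eps c))))
    ≫ (S.xb a ◁ (S.F.map X ◁ (S.F.map Y ◁ (ρ_ (S.x c)).hom)))

end Setup

/-- A choice, for every 1-cell `X` of `C`, of a splitting `u_X : G(X) ⟶ x_b ⊠ F(X) ⊠ x̄_a`
of the projection `p_X` (possible since `D` is locally orthogonal projection complete),
normalized on identity 1-cells as in the paper: `G(1_a) = 1_{c_a}` and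
`u_{1_a} = (id ⊠ F¹_a ⊠ id) ∘ ε_a*`. -/
structure GData {C : Type u₁} {D : Type u₂}
    [Bicategory.{w₁, v₁} C] [Bicategory.Strict C] [CStarStruct C]
    [Bicategory.{w₂, v₂} D] [Bicategory.Strict D] [CStarStruct D]
    (S : Setup C D) where
  G1 : ∀ {a b : C}, (a ⟶ b) → (S.cc a ⟶ S.cc b)
  u : ∀ {a b : C} (X : a ⟶ b), G1 X ⟶ S.xb a ≫ S.F.map X ≫ S.x b
  hu_isometry : ∀ {a b : C} (X : a ⟶ b), u X ≫ star2 (u X) = 𝟙 (G1 X)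
  hu_proj : ∀ {a b : C} (X : a ⟶ b), star2 (u X) ≫ u X = S.p X
  hG1_id : ∀ a : C, G1 (𝟙 a) = 𝟙 (S.cc a)
  hu_id : ∀ a : C,
    u (𝟙 a) = eqToHom (hG1_id a) ≫ star2 (S.eps a)
      ≫ (S.xb a ◁ ((λ_ (S.x a)).inv ≫ (S.F.unitor a ▷ S.x a)))

namespace GData

variable {C : Type u₁} {D : Type u₂}
variable [Bicategory.{w₁, v₁} C] [Bicategory.Strict C] [CStarStruct C]
variable [Bicategory.{w₂, v₂} D] [Bicategory.Strict D] [CStarStruct D]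
variable {S : Setup C D}

/-- `G` on 2-cells: `G(f) := u_Y* ∘ (id ⊠ F(f) ⊠ id) ∘ u_X`. -/
def Gmap2 (E : GData S) {a b : C} {X Y : a ⟶ b} (f : X ⟶ Y) : E.G1 X ⟶ E.G1 Y :=
  E.u X ≫ (S.xb a ◁ (S.F.map2 f ▷ S.x b)) ≫ star2 (E.u Y)

/-- The tensorator of `G`:
`G²_{X,Y} := u_{X⊠Y}* ∘ (id ⊠ F² ⊠ id) ∘ (id ⊠ η* ⊠ id) ∘ (u_X ⊠ u_Y)`. -/
def Gtensor (E : GData S) {a b c : C} (X : a ⟶ b) (Y : b ⟶ c) :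
    E.G1 X ≫ E.G1 Y ⟶ E.G1 (X ≫ Y) :=
  (E.u X ▷ E.G1 Y)
    ≫ ((S.xb a ≫ S.F.map X ≫ S.x b) ◁ E.u Y)
    ≫ (α_ (S.xb a) (S.F.map X ≫ S.x b) (S.xb b ≫ S.F.map Y ≫ S.x c)).hom
    ≫ (S.xb a ◁ (α_ (S.F.map X) (S.x b) (S.xb b ≫ S.F.map Y ≫ S.x c)).hom)
    ≫ (S.xb a ◁ (S.F.map X ◁ (α_ (S.x b) (S.xb b) (S.F.map Y ≫ S.x c)).inv))
    ≫ (S.xb a ◁ (S.F.map X ◁ (star2 (S.η b) ▷ (S.F.map Y ≫ S.x c))))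
    ≫ (S.xb a ◁ (S.F.map X ◁ (λ_ (S.F.map Y ≫ S.x c)).hom))
    ≫ (S.xb a ◁ (α_ (S.F.map X) (S.F.map Y) (S.x c)).inv)
    ≫ (S.xb a ◁ (S.F.tensorator X Y ▷ S.x c))
    ≫ star2 (E.u (X ≫ Y))

/-- The full 2-functor data of `G`. -/
def toFunctor (E : GData S) : TwoFunctorData C D where
  obj a := S.cc a
  map X := E.G1 X
  map2 f := E.Gmap2 f
  tensorator X Y := E.Gtensor X Y
  unitor a := eqToHom (E.hG1_id a).symm

/-- The components of the 2-transformation `φ : F ⇒ G`: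
`φ_X := (u_X* ⊠ id_{x_a}) ∘ (id ⊠ η_a)`. -/
def φnat (E : GData S) {a b : C} (X : a ⟶ b) :
    S.F.map X ≫ S.x b ⟶ S.x a ≫ E.G1 X :=
  (λ_ (S.F.map X ≫ S.x b)).inv
    ≫ (S.η a ▷ (S.F.map X ≫ S.x b))
    ≫ (α_ (S.x a) (S.xb a) (S.F.map X ≫ S.x b)).hom
    ≫ (S.x a ◁ star2 (E.u X))

/-- The components of the 2-transformation `φ̄ : G ⇒ F`:
`φ̄_X := (η_b* ⊠ id) ∘ (id_{x̄_b} ⊠ u_X)`. -/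
def φbnat (E : GData S) {a b : C} (X : a ⟶ b) :
    E.G1 X ≫ S.xb b ⟶ S.xb a ≫ S.F.map X :=
  (E.u X ▷ S.xb b)
    ≫ (α_ (S.xb a) (S.F.map X ≫ S.x b) (S.xb b)).hom
    ≫ (S.xb a ◁ (α_ (S.F.map X) (S.x b) (S.xb b)).hom)
    ≫ (S.xb a ◁ (S.F.map X ◁ star2 (S.η b)))
    ≫ (S.xb a ◁ (ρ_ (S.F.map X)).hom)

/-- The 2-transformation `φ : F ⇒ G`, with `φ_a := x_a`. -/
def φT (E : GData S) : TransfData S.F E.toFunctor where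
  app a := S.x a
  natur {a b} X := E.φnat X

/-- The 2-transformation `φ̄ : G ⇒ F`, with `φ̄_a := x̄_a`. -/
def φbT (E : GData S) : TransfData E.toFunctor S.F where
  app a := S.xb a
  natur {a b} X := E.φbnat X

end GData

/-- In the standing setup, the projections `p_X` are natural in `X`:
for every 2-cell `f : X ⟶ Y`,
`(id ⊠ F(f) ⊠ id) ∘ p_X = p_Y ∘ (id ⊠ F(f) ⊠ id)`. -/
theorem pX_natural
    {C : Type u₁} {D : Type u₂}
    [Bicategory.{w₁, v₁} C] [Bicategory.Strict C] [CStarStruct C]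
    [Bicategory.{w₂, v₂} D] [Bicategory.Strict D] [CStarStruct D]
    (S : Setup C D) {a b : C} {X Y : a ⟶ b} (f : X ⟶ Y) :
    S.p X ≫ (S.xb a ◁ (S.F.map2 f ▷ S.x b))
      = (S.xb a ◁ (S.F.map2 f ▷ S.x b)) ≫ S.p Y := by
  have h1 := (S.hψ.1 X).2
  have h2 := (S.hψ.1 Y).1
  have h3 := S.hψ.2.1 f
  have key : star2 (S.ψ.natur X) ≫ (S.F.map2 f ▷ S.ψ.app b)
      = (S.ψ.app a ◁ S.F.map2 f) ≫ star2 (S.ψ.natur Y) := by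
    calc star2 (S.ψ.natur X) ≫ (S.F.map2 f ▷ S.ψ.app b)
        = star2 (S.ψ.natur X) ≫ (S.F.map2 f ▷ S.ψ.app b)
            ≫ S.ψ.natur Y ≫ star2 (S.ψ.natur Y) := by
          rw [h2]; simp
      _ = (star2 (S.ψ.natur X) ≫ S.ψ.natur X)
            ≫ (S.ψ.app a ◁ S.F.map2 f) ≫ star2 (S.ψ.natur Y) := by
          rw [← Category.assoc (S.F.map2 f ▷ S.ψ.app b), h3]; simp
      _ = (S.ψ.app a ◁ S.F.map2 f) ≫ star2 (S.ψ.natur Y) := by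
          rw [h1]; simp
  simp only [Setup.p, Category.assoc]
  slice_lhs 12 13 => rw [← Bicategory.whiskerLeft_comp, whisker_exchange, Bicategory.whiskerLeft_comp]
  try simp only [Category.assoc]
  slice_lhs 11 12 => rw [← Bicategory.whiskerLeft_comp, whisker_exchange, Bicategory.whiskerLeft_comp]
  try simp only [Category.assoc]
  slice_lhs 10 11 => rw [← Bicategory.whiskerLeft_comp, whisker_exchange, Bicategory.whiskerLeft_comp]
  try simp only [Category.assoc]
  slice_lhs 9 10 => rw [← Bicategory.whiskerLeft_comp, whisker_exchange, Bicategory.whiskerLeft_comp]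
  try simp only [Category.assoc]
  slice_lhs 8 9 => rw [← Bicategory.whiskerLeft_comp, ← associator_naturality_left, Bicategory.whiskerLeft_comp]
  try simp only [Category.assoc]
  slice_lhs 7 8 => rw [← Bicategory.whiskerLeft_comp, ← Bicategory.comp_whiskerRight, key, Bicategory.comp_whiskerRight,
    Bicategory.whiskerLeft_comp]
  try simp only [Category.assoc]
  slice_lhs 6 7 => rw [← Bicategory.whiskerLeft_comp, ← associator_inv_naturality_middle, Bicategory.whiskerLeft_comp]
  try simp only [Category.assoc]
  slice_lhs 5 6 => rw [← Bicategory.whiskerLeft_comp, ← whisker_exchange, Bicategory.whiskerLeft_comp]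
  try simp only [Category.assoc]
  slice_lhs 4 5 => rw [← Bicategory.whiskerLeft_comp, ← associator_inv_naturality_right, Bicategory.whiskerLeft_comp]
  try simp only [Category.assoc]
  slice_lhs 3 4 => rw [← associator_naturality_right]
  try simp only [Category.assoc]
  slice_lhs 2 3 => rw [← whisker_exchange]
  try simp only [Category.assoc]
  slice_lhs 1 2 => rw [← leftUnitor_inv_naturality]
  try simp only [Category.assoc]
  try simp only [Category.assoc]
end

section
/- In the standing setup with G, u_X, φ and φ̄ as defined, for every 1-cell X ∈ C₁(a,b) the 2-cells φ_X : x_b ⊠ F(X) → G(X) ⊠ x_a and φ̄_X : x̄_b ⊠ G(X) → F(X) ⊠ x̄_a are unitary. -/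
/-!
Self-contained background for formalizing results from
"Q-system completion of C*-2-categories of 2-functors".

We model a strict C*-2-category as a (Mathlib) bicategory which is `Bicategory.Strict`,
together with a `CStarStruct`: a star operation and a norm on 2-cells, compatible with
the vertical composition and the horizontal whiskerings.
-/

open CategoryTheory CategoryTheory.Bicategory

universe w₁ v₁ u₁ w₂ v₂ u₂

/-! ### Auxiliary lemmas -/

section StarBasic

variable {B : Type u₁} [Bicategory.{w₁, v₁} B] [CStarStruct B]

@[simp] lemma star2_comp {a b : B} {f g h : a ⟶ b} (η : f ⟶ g) (θ : g ⟶ h) :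
    star2 (η ≫ θ) = star2 θ ≫ star2 η := CStarStruct.star_comp η θ

@[simp] lemma star2_star2 {a b : B} {f g : a ⟶ b} (η : f ⟶ g) :
    star2 (star2 η) = η := CStarStruct.star_star η

@[simp] lemma star2_id {a b : B} (f : a ⟶ b) : star2 (𝟙 f) = 𝟙 f :=
  CStarStruct.star_id f

@[simp] lemma star2_whiskerLeft {a b c : B} (f : a ⟶ b) {g h : b ⟶ c} (η : g ⟶ h) :
    star2 (f ◁ η) = f ◁ star2 η := CStarStruct.star_whiskerLeft f η

@[simp] lemma star2_whiskerRight {a b c : B} {f g : a ⟶ b} (η : f ⟶ g) (h : b ⟶ c) :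
    star2 (η ▷ h) = star2 η ▷ h := CStarStruct.star_whiskerRight η h

variable [Bicategory.Strict B]

@[simp] lemma star2_eqToHom {a b : B} {f g : a ⟶ b} (h : f = g) :
    star2 (eqToHom h) = eqToHom h.symm := by subst h; simp

@[simp] lemma star2_associator_hom {a b c d : B} (f : a ⟶ b) (g : b ⟶ c) (h : c ⟶ d) :
    star2 (α_ f g h).hom = (α_ f g h).inv := by
  rw [Bicategory.Strict.associator_eqToIso (B := B)]; simp

@[simp] lemma star2_associator_inv {a b c d : B} (f : a ⟶ b) (g : b ⟶ c) (h : c ⟶ d) :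
    star2 (α_ f g h).inv = (α_ f g h).hom := by
  rw [Bicategory.Strict.associator_eqToIso (B := B)]; simp

@[simp] lemma star2_leftUnitor_hom {a b : B} (f : a ⟶ b) :
    star2 (λ_ f).hom = (λ_ f).inv := by
  rw [Bicategory.Strict.leftUnitor_eqToIso (B := B)]; simp

@[simp] lemma star2_leftUnitor_inv {a b : B} (f : a ⟶ b) :
    star2 (λ_ f).inv = (λ_ f).hom := by
  rw [Bicategory.Strict.leftUnitor_eqToIso (B := B)]; simp

@[simp] lemma star2_rightUnitor_hom {a b : B} (f : a ⟶ b) :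
    star2 (ρ_ f).hom = (ρ_ f).inv := by
  rw [Bicategory.Strict.rightUnitor_eqToIso (B := B)]; simp

@[simp] lemma star2_rightUnitor_inv {a b : B} (f : a ⟶ b) :
    star2 (ρ_ f).inv = (ρ_ f).hom := by
  rw [Bicategory.Strict.rightUnitor_eqToIso (B := B)]; simp

end StarBasic

namespace Setup

variable {C : Type u₁} {D : Type u₂}
variable [Bicategory.{w₁, v₁} C] [Bicategory.Strict C] [CStarStruct C]
variable [Bicategory.{w₂, v₂} D] [Bicategory.Strict D] [CStarStruct D]
variable (S : Setup C D)

/-- `t_a = (id ⊠ γ⁽ᵃ⁾) ∘ (eps_a* ⊠ id) : x̄_a → x̄_a ⊠ ψ_a`. -/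
def tcell (a : C) : S.xb a ⟶ S.xb a ≫ S.ψ.app a :=
  (λ_ (S.xb a)).inv ≫ (star2 (S.eps a) ▷ S.xb a) ≫ (α_ (S.xb a) (S.x a) (S.xb a)).hom
    ≫ (S.xb a ◁ S.γ a)

/-- `r_b = (id ⊠ eps_b) ∘ (γ⁽ᵇ⁾* ⊠ id) : ψ_b ⊠ x_b → x_b`. -/
def rcell (b : C) : S.ψ.app b ≫ S.x b ⟶ S.x b :=
  (star2 (S.γ b) ▷ S.x b) ≫ (α_ (S.x b) (S.xb b) (S.x b)).hom ≫ (S.x b ◁ S.eps b)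
    ≫ (ρ_ (S.x b)).hom

/-- The left action of `ψ_a` on `F(X) ⊠ x_b`. -/
def rX {a b : C} (X : a ⟶ b) : S.ψ.app a ≫ S.F.map X ≫ S.x b ⟶ S.F.map X ≫ S.x b :=
  (α_ (S.ψ.app a) (S.F.map X) (S.x b)).inv ≫ (star2 (S.ψ.natur X) ▷ S.x b)
    ≫ (α_ (S.F.map X) (S.ψ.app b) (S.x b)).hom ≫ (S.F.map X ◁ S.rcell b)

/-- The coaction `x̄_a ⊠ F(X) → x̄_a ⊠ F(X) ⊠ ψ_b`. -/
def eX {a b : C} (X : a ⟶ b) : S.xb a ≫ S.F.map X ⟶ S.xb a ≫ S.F.map X ≫ S.ψ.app b :=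
  (S.tcell a ▷ S.F.map X) ≫ (α_ (S.xb a) (S.ψ.app a) (S.F.map X)).hom
    ≫ (S.xb a ◁ star2 (S.ψ.natur X))


/-- `m` with its domain syntactically normalized. -/
def mm (a : C) : S.ψ.app a ≫ S.ψ.app a ⟶ S.ψ.app a := S.m a

/-- `i` with its domain syntactically normalized. -/
def ii (a : C) : 𝟙 (S.F.obj a) ⟶ S.ψ.app a := S.i a

lemma hγm' (a : C) :
    dualMult (S.x a) (S.xb a) (S.eps a) ≫ S.γ a
      = ((S.γ a ▷ (S.x a ≫ S.xb a)) ≫ (S.ψ.app a ◁ S.γ a)) ≫ S.mm a := S.hγm a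

lemma hγi' (a : C) : S.η a ≫ S.γ a = S.ii a := S.hγi a

lemma hm' {a b : C} (X : a ⟶ b) :
    (S.F.map X ◁ S.mm b) ≫ S.ψ.natur X
      = ((α_ (S.F.map X) (S.ψ.app b) (S.ψ.app b)).inv
          ≫ (S.ψ.natur X ▷ S.ψ.app b)
          ≫ (α_ (S.ψ.app a) (S.F.map X) (S.ψ.app b)).hom
          ≫ (S.ψ.app a ◁ S.ψ.natur X)
          ≫ (α_ (S.ψ.app a) (S.ψ.app a) (S.F.map X)).inv)
        ≫ (S.mm a ▷ S.F.map X) := S.hm.2 X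

lemma hi' {a b : C} (X : a ⟶ b) :
    (S.F.map X ◁ S.ii b) ≫ S.ψ.natur X
      = ((ρ_ (S.F.map X)).hom ≫ (λ_ (S.F.map X)).inv) ≫ (S.ii a ▷ S.F.map X) :=
  S.hi.2 X

lemma hQ_unit_l (a : C) :
    (S.ii a ▷ S.ψ.app a) ≫ S.mm a = (λ_ (S.ψ.app a)).hom := (S.hQ a).2.1

lemma hQ_unit_r (a : C) :
    (S.ψ.app a ◁ S.ii a) ≫ S.mm a = (ρ_ (S.ψ.app a)).hom := (S.hQ a).2.2.1

lemma hQ_frob (a : C) :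
    S.mm a ≫ star2 (S.mm a)
      = (star2 (S.mm a) ▷ S.ψ.app a)
          ≫ (α_ (S.ψ.app a) (S.ψ.app a) (S.ψ.app a)).hom
          ≫ (S.ψ.app a ◁ S.mm a) := (S.hQ a).2.2.2.1

lemma eta_eq (a : C) : S.η a = S.ii a ≫ star2 (S.γ a) := by
  rw [← S.hγi' a, Category.assoc, (S.hγu a).1, Category.comp_id]

lemma etastar_eq (a : C) : star2 (S.η a) = S.γ a ≫ star2 (S.ii a) := by
  rw [S.eta_eq a]; simp

lemma gam_istar (a : C) : S.γ a ≫ star2 (S.ii a) = star2 (S.η a) :=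
  (S.etastar_eq a).symm

lemma i_gamstar (a : C) : S.ii a ≫ star2 (S.γ a) = S.η a := (S.eta_eq a).symm

lemma NN (a : C) :
    star2 (S.η a) ≫ S.η a
      = S.γ a ≫ star2 (S.ii a) ≫ S.ii a ≫ star2 (S.γ a) := by
  rw [S.eta_eq a]; simp

lemma zig1star (a : C) :
    (ρ_ (S.x a)).inv ≫ (S.x a ◁ star2 (S.eps a)) ≫ (α_ (S.x a) (S.xb a) (S.x a)).inv
      ≫ (star2 (S.η a) ▷ S.x a) ≫ (λ_ (S.x a)).hom = 𝟙 (S.x a) := by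
  have h := congrArg star2 (S.hdual a).1
  simpa using h

lemma zig2star (a : C) :
    (λ_ (S.xb a)).inv ≫ (star2 (S.eps a) ▷ S.xb a) ≫ (α_ (S.xb a) (S.x a) (S.xb a)).hom
      ≫ (S.xb a ◁ star2 (S.η a)) ≫ (ρ_ (S.xb a)).hom = 𝟙 (S.xb a) := by
  have h := congrArg star2 (S.hdual a).2.1
  simpa using h

lemma m_eq (a : C) :
    S.mm a = (S.ψ.app a ◁ star2 (S.γ a)) ≫ (star2 (S.γ a) ▷ (S.x a ≫ S.xb a))
      ≫ dualMult (S.x a) (S.xb a) (S.eps a) ≫ S.γ a := by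
  have h : (S.ψ.app a ◁ star2 (S.γ a)) ≫ (star2 (S.γ a) ▷ (S.x a ≫ S.xb a))
      ≫ ((S.γ a ▷ (S.x a ≫ S.xb a)) ≫ (S.ψ.app a ◁ S.γ a)) ≫ S.mm a = S.mm a := by
    calc _ = (S.ψ.app a ◁ star2 (S.γ a)) ≫ ((star2 (S.γ a) ≫ S.γ a) ▷ (S.x a ≫ S.xb a))
          ≫ (S.ψ.app a ◁ S.γ a) ≫ S.mm a := by bicategory
      _ = (S.ψ.app a ◁ star2 (S.γ a)) ≫ (S.ψ.app a ◁ S.γ a) ≫ S.mm a := by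
          rw [(S.hγu a).2]; bicategory
      _ = (S.ψ.app a ◁ (star2 (S.γ a) ≫ S.γ a)) ≫ S.mm a := by bicategory
      _ = S.mm a := by rw [(S.hγu a).2]; simp
  conv_lhs => rw [← h]
  rw [S.hγm' a]

end Setup

namespace Setup

variable {C : Type u₁} {D : Type u₂}
variable [Bicategory.{w₁, v₁} C] [Bicategory.Strict C] [CStarStruct C]
variable [Bicategory.{w₂, v₂} D] [Bicategory.Strict D] [CStarStruct D]
variable (S : Setup C D)

lemma gamma_mstar (a : C) :
    S.γ a ≫ star2 (S.mm a)
      = (S.x a ◁ S.tcell a) ≫ (α_ (S.x a) (S.xb a) (S.ψ.app a)).inv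
          ≫ (S.γ a ▷ S.ψ.app a) := by
  have key : S.γ a ≫ star2 (S.mm a)
      = (S.x a ◁ ((λ_ (S.xb a)).inv ≫ (star2 (S.eps a) ▷ S.xb a)
            ≫ (α_ (S.xb a) (S.x a) (S.xb a)).hom))
        ≫ (α_ (S.x a) (S.xb a) (S.x a ≫ S.xb a)).inv
        ≫ (S.γ a ▷ (S.x a ≫ S.xb a)) ≫ (S.ψ.app a ◁ S.γ a) := by
    rw [S.m_eq a]
    simp only [dualMult, star2_comp, star2_whiskerLeft, star2_whiskerRight, star2_star2,
      star2_associator_hom, star2_associator_inv, star2_leftUnitor_hom, star2_leftUnitor_inv,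
      star2_rightUnitor_hom, star2_rightUnitor_inv, Category.assoc]
    rw [reassoc_of% (S.hγu a).1]
  rw [key, ← whisker_exchange]
  dsimp only [tcell]; bicategory

lemma rcell_gamma (b : C) :
    (α_ (S.ψ.app b) (S.x b) (S.xb b)).inv ≫ (S.rcell b ▷ S.xb b) ≫ S.γ b
      = (S.ψ.app b ◁ S.γ b) ≫ S.mm b := by
  have h2 : (S.ψ.app b ◁ S.γ b) ≫ S.mm b
      = (star2 (S.γ b) ▷ (S.x b ≫ S.xb b))
          ≫ dualMult (S.x b) (S.xb b) (S.eps b) ≫ S.γ b := by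
    rw [S.m_eq b]
    calc _ = (S.ψ.app b ◁ (S.γ b ≫ star2 (S.γ b)))
          ≫ (star2 (S.γ b) ▷ (S.x b ≫ S.xb b))
          ≫ dualMult (S.x b) (S.xb b) (S.eps b) ≫ S.γ b := by bicategory
      _ = _ := by
          rw [(S.hγu b).1]
          simp only [Bicategory.whiskerLeft_id, Category.id_comp]
  rw [h2]
  dsimp only [rcell, dualMult]; bicategory

lemma p_decomp {a b : C} (X : a ⟶ b) :
    S.p X = (S.tcell a ▷ (S.F.map X ≫ S.x b))
      ≫ (α_ (S.xb a) (S.ψ.app a) (S.F.map X ≫ S.x b)).hom ≫ (S.xb a ◁ S.rX X) := by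
  dsimp only [p, tcell, rcell, rX]; bicategory

lemma I_push {a b : C} (X : a ⟶ b) :
    (S.mm a ▷ S.F.map X) ≫ star2 (S.ψ.natur X)
      = (α_ (S.ψ.app a) (S.ψ.app a) (S.F.map X)).hom
        ≫ (S.ψ.app a ◁ star2 (S.ψ.natur X))
        ≫ (α_ (S.ψ.app a) (S.F.map X) (S.ψ.app b)).inv
        ≫ (star2 (S.ψ.natur X) ▷ S.ψ.app b)
        ≫ (α_ (S.F.map X) (S.ψ.app b) (S.ψ.app b)).hom
        ≫ (S.F.map X ◁ S.mm b) := by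
  have hm := S.hm' X
  have h1 : (S.mm a ▷ S.F.map X)
      = (α_ (S.ψ.app a) (S.ψ.app a) (S.F.map X)).hom
        ≫ (S.ψ.app a ◁ star2 (S.ψ.natur X))
        ≫ (α_ (S.ψ.app a) (S.F.map X) (S.ψ.app b)).inv
        ≫ (star2 (S.ψ.natur X) ▷ S.ψ.app b)
        ≫ (α_ (S.F.map X) (S.ψ.app b) (S.ψ.app b)).hom
        ≫ ((S.F.map X ◁ S.mm b) ≫ S.ψ.natur X) := by
    rw [hm]
    symm
    calc (α_ (S.ψ.app a) (S.ψ.app a) (S.F.map X)).hom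
        ≫ (S.ψ.app a ◁ star2 (S.ψ.natur X))
        ≫ (α_ (S.ψ.app a) (S.F.map X) (S.ψ.app b)).inv
        ≫ (star2 (S.ψ.natur X) ▷ S.ψ.app b)
        ≫ (α_ (S.F.map X) (S.ψ.app b) (S.ψ.app b)).hom
        ≫ ((α_ (S.F.map X) (S.ψ.app b) (S.ψ.app b)).inv
            ≫ (S.ψ.natur X ▷ S.ψ.app b)
            ≫ (α_ (S.ψ.app a) (S.F.map X) (S.ψ.app b)).hom
            ≫ (S.ψ.app a ◁ S.ψ.natur X)
            ≫ (α_ (S.ψ.app a) (S.ψ.app a) (S.F.map X)).inv)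
        ≫ (S.mm a ▷ S.F.map X)
        = (α_ (S.ψ.app a) (S.ψ.app a) (S.F.map X)).hom
          ≫ (S.ψ.app a ◁ star2 (S.ψ.natur X))
          ≫ (α_ (S.ψ.app a) (S.F.map X) (S.ψ.app b)).inv
          ≫ ((star2 (S.ψ.natur X) ≫ S.ψ.natur X) ▷ S.ψ.app b)
          ≫ (α_ (S.ψ.app a) (S.F.map X) (S.ψ.app b)).hom
          ≫ (S.ψ.app a ◁ S.ψ.natur X)
          ≫ (α_ (S.ψ.app a) (S.ψ.app a) (S.F.map X)).inv
          ≫ (S.mm a ▷ S.F.map X) := by bicategory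
      _ = (α_ (S.ψ.app a) (S.ψ.app a) (S.F.map X)).hom
          ≫ (S.ψ.app a ◁ star2 (S.ψ.natur X))
          ≫ (S.ψ.app a ◁ S.ψ.natur X)
          ≫ (α_ (S.ψ.app a) (S.ψ.app a) (S.F.map X)).inv
          ≫ (S.mm a ▷ S.F.map X) := by rw [(S.hψ.1 X).2]; bicategory
      _ = (α_ (S.ψ.app a) (S.ψ.app a) (S.F.map X)).hom
          ≫ (S.ψ.app a ◁ (star2 (S.ψ.natur X) ≫ S.ψ.natur X))
          ≫ (α_ (S.ψ.app a) (S.ψ.app a) (S.F.map X)).inv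
          ≫ (S.mm a ▷ S.F.map X) := by
            rw [Bicategory.whiskerLeft_comp]; simp only [Category.assoc]
      _ = S.mm a ▷ S.F.map X := by rw [(S.hψ.1 X).2]; simp
  calc (S.mm a ▷ S.F.map X) ≫ star2 (S.ψ.natur X)
      = (α_ (S.ψ.app a) (S.ψ.app a) (S.F.map X)).hom
        ≫ (S.ψ.app a ◁ star2 (S.ψ.natur X))
        ≫ (α_ (S.ψ.app a) (S.F.map X) (S.ψ.app b)).inv
        ≫ (star2 (S.ψ.natur X) ▷ S.ψ.app b)
        ≫ (α_ (S.F.map X) (S.ψ.app b) (S.ψ.app b)).hom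
        ≫ (S.F.map X ◁ S.mm b) ≫ (S.ψ.natur X ≫ star2 (S.ψ.natur X)) := by
        rw [h1]; simp only [Category.assoc]
    _ = _ := by rw [(S.hψ.1 X).1]; simp

lemma S_push {a b : C} (X : a ⟶ b) :
    star2 (S.ψ.natur X) ≫ (S.F.map X ◁ star2 (S.mm b))
      = (star2 (S.mm a) ▷ S.F.map X)
        ≫ (α_ (S.ψ.app a) (S.ψ.app a) (S.F.map X)).hom
        ≫ (S.ψ.app a ◁ star2 (S.ψ.natur X))
        ≫ (α_ (S.ψ.app a) (S.F.map X) (S.ψ.app b)).inv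
        ≫ (star2 (S.ψ.natur X) ▷ S.ψ.app b)
        ≫ (α_ (S.F.map X) (S.ψ.app b) (S.ψ.app b)).hom := by
  have hm := S.hm' X
  have h := congrArg star2 hm
  simp only [star2_comp, star2_whiskerLeft, star2_whiskerRight, star2_star2,
    star2_associator_hom, star2_associator_inv, Category.assoc] at h
  exact h

lemma istar_push {a b : C} (X : a ⟶ b) :
    star2 (S.ψ.natur X) ≫ (S.F.map X ◁ star2 (S.ii b))
      = (star2 (S.ii a) ▷ S.F.map X) ≫ (λ_ (S.F.map X)).hom ≫ (ρ_ (S.F.map X)).inv := by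
  have hi := S.hi' X
  have h := congrArg star2 hi
  simp only [star2_comp, star2_whiskerLeft, star2_whiskerRight, star2_star2,
    star2_leftUnitor_hom, star2_leftUnitor_inv, star2_rightUnitor_hom, star2_rightUnitor_inv,
    Category.assoc] at h
  exact h

lemma ibar {a b : C} (X : a ⟶ b) :
    (S.ii a ▷ S.F.map X) ≫ star2 (S.ψ.natur X)
      = (λ_ (S.F.map X)).hom ≫ (ρ_ (S.F.map X)).inv ≫ (S.F.map X ◁ S.ii b) := by
  have hi := S.hi' X
  have hi' : (S.F.map X ◁ S.ii b) ≫ S.ψ.natur X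
      = (ρ_ (S.F.map X)).hom ≫ (λ_ (S.F.map X)).inv ≫ (S.ii a ▷ S.F.map X) := by
    rw [hi]; simp only [Category.assoc]
  calc (S.ii a ▷ S.F.map X) ≫ star2 (S.ψ.natur X)
      = ((λ_ (S.F.map X)).hom ≫ (ρ_ (S.F.map X)).inv
          ≫ ((ρ_ (S.F.map X)).hom ≫ (λ_ (S.F.map X)).inv ≫ (S.ii a ▷ S.F.map X)))
          ≫ star2 (S.ψ.natur X) := by simp
    _ = (λ_ (S.F.map X)).hom ≫ (ρ_ (S.F.map X)).inv
          ≫ (S.F.map X ◁ S.ii b) ≫ (S.ψ.natur X ≫ star2 (S.ψ.natur X)) := by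
        rw [← hi']; simp only [Category.assoc]
    _ = _ := by rw [(S.hψ.1 X).1]; simp

end Setup

namespace Setup

variable {C : Type u₁} {D : Type u₂}
variable [Bicategory.{w₁, v₁} C] [Bicategory.Strict C] [CStarStruct C]
variable [Bicategory.{w₂, v₂} D] [Bicategory.Strict D] [CStarStruct D]
variable (S : Setup C D)

lemma m_gamstar (b : C) :
    S.mm b ≫ star2 (S.γ b)
      = (S.ψ.app b ◁ star2 (S.γ b)) ≫ (star2 (S.γ b) ▷ (S.x b ≫ S.xb b))
          ≫ dualMult (S.x b) (S.xb b) (S.eps b) := by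
  rw [S.m_eq b]
  simp only [Category.assoc, (S.hγu b).1, Category.comp_id]

lemma r2_mod (b : C) :
    (S.ψ.app b ◁ S.rcell b) ≫ S.rcell b
      = (α_ (S.ψ.app b) (S.ψ.app b) (S.x b)).inv ≫ (S.mm b ▷ S.x b) ≫ S.rcell b := by
  have hL : (S.ψ.app b ◁ S.rcell b) ≫ S.rcell b
      = (star2 (S.γ b) ▷ (S.ψ.app b ≫ S.x b))
        ⊗≫ ((S.x b ≫ S.xb b) ◁ (star2 (S.γ b) ▷ S.x b))
        ⊗≫ ((((S.x b ◁ S.eps b) ≫ (ρ_ (S.x b)).hom) ▷ (S.xb b ≫ S.x b))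
              ≫ (S.x b ◁ S.eps b))
        ⊗≫ 𝟙 (S.x b) := by
    dsimp only [rcell]
    slice_lhs 1 2 => rw [whisker_exchange]
    calc _ = (star2 (S.γ b) ▷ (S.ψ.app b ≫ S.x b))
            ⊗≫ ((S.x b ≫ S.xb b) ◁ (star2 (S.γ b) ▷ S.x b))
            ⊗≫ (((S.x b ≫ S.xb b ≫ S.x b) ◁ S.eps b)
                  ≫ (((S.x b ◁ S.eps b) ≫ (ρ_ (S.x b)).hom) ▷ 𝟙 (S.cc b)))
            ⊗≫ 𝟙 (S.x b) := by bicategory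
      _ = _ := by rw [whisker_exchange]
  have hR : (α_ (S.ψ.app b) (S.ψ.app b) (S.x b)).inv ≫ (S.mm b ▷ S.x b) ≫ S.rcell b
      = (star2 (S.γ b) ▷ (S.ψ.app b ≫ S.x b))
        ⊗≫ ((S.x b ≫ S.xb b) ◁ (star2 (S.γ b) ▷ S.x b))
        ⊗≫ ((((S.x b ◁ S.eps b) ≫ (ρ_ (S.x b)).hom) ▷ (S.xb b ≫ S.x b))
              ≫ (S.x b ◁ S.eps b))
        ⊗≫ 𝟙 (S.x b) := by
    calc (α_ (S.ψ.app b) (S.ψ.app b) (S.x b)).inv ≫ (S.mm b ▷ S.x b) ≫ S.rcell b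
        = (α_ (S.ψ.app b) (S.ψ.app b) (S.x b)).inv
            ≫ ((S.mm b ≫ star2 (S.γ b)) ▷ S.x b)
            ≫ (α_ (S.x b) (S.xb b) (S.x b)).hom ≫ (S.x b ◁ S.eps b)
            ≫ (ρ_ (S.x b)).hom := by
          dsimp only [rcell]; bicategory
      _ = (α_ (S.ψ.app b) (S.ψ.app b) (S.x b)).inv
            ≫ ((((S.ψ.app b ◁ star2 (S.γ b))
                  ≫ (star2 (S.γ b) ▷ (S.x b ≫ S.xb b)))
                  ≫ dualMult (S.x b) (S.xb b) (S.eps b)) ▷ S.x b)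
            ≫ (α_ (S.x b) (S.xb b) (S.x b)).hom ≫ (S.x b ◁ S.eps b)
            ≫ (ρ_ (S.x b)).hom := by
          rw [S.m_gamstar b]; simp only [Category.assoc]
      _ = (α_ (S.ψ.app b) (S.ψ.app b) (S.x b)).inv
            ≫ ((((star2 (S.γ b) ▷ S.ψ.app b)
                  ≫ ((S.x b ≫ S.xb b) ◁ star2 (S.γ b)))
                  ≫ dualMult (S.x b) (S.xb b) (S.eps b)) ▷ S.x b)
            ≫ (α_ (S.x b) (S.xb b) (S.x b)).hom ≫ (S.x b ◁ S.eps b)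
            ≫ (ρ_ (S.x b)).hom := by rw [whisker_exchange]
      _ = _ := by dsimp only [dualMult]; bicategory
  rw [hL, hR]

end Setup

namespace Setup

variable {C : Type u₁} {D : Type u₂}
variable [Bicategory.{w₁, v₁} C] [Bicategory.Strict C] [CStarStruct C]
variable [Bicategory.{w₂, v₂} D] [Bicategory.Strict D] [CStarStruct D]
variable (S : Setup C D)

lemma rX_mod {a b : C} (X : a ⟶ b) :
    (S.ψ.app a ◁ S.rX X) ≫ S.rX X
      = (α_ (S.ψ.app a) (S.ψ.app a) (S.F.map X ≫ S.x b)).inv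
          ≫ (S.mm a ▷ (S.F.map X ≫ S.x b)) ≫ S.rX X := by
  calc (S.ψ.app a ◁ S.rX X) ≫ S.rX X
      = (S.ψ.app a ◁ ((α_ (S.ψ.app a) (S.F.map X) (S.x b)).inv
            ≫ (star2 (S.ψ.natur X) ▷ S.x b)
            ≫ (α_ (S.F.map X) (S.ψ.app b) (S.x b)).hom))
          ⊗≫ (((S.ψ.app a ≫ S.F.map X) ◁ S.rcell b)
                ≫ (star2 (S.ψ.natur X) ▷ S.x b))
          ⊗≫ (S.F.map X ◁ S.rcell b) ⊗≫ 𝟙 (S.F.map X ≫ S.x b) := by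
        dsimp only [rX]; bicategory
    _ = (S.ψ.app a ◁ ((α_ (S.ψ.app a) (S.F.map X) (S.x b)).inv
            ≫ (star2 (S.ψ.natur X) ▷ S.x b)
            ≫ (α_ (S.F.map X) (S.ψ.app b) (S.x b)).hom))
          ⊗≫ ((star2 (S.ψ.natur X) ▷ (S.ψ.app b ≫ S.x b))
                ≫ ((S.F.map X ≫ S.ψ.app b) ◁ S.rcell b))
          ⊗≫ (S.F.map X ◁ S.rcell b) ⊗≫ 𝟙 (S.F.map X ≫ S.x b) := by
        rw [whisker_exchange]
    _ = (S.ψ.app a ◁ ((α_ (S.ψ.app a) (S.F.map X) (S.x b)).inv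
            ≫ (star2 (S.ψ.natur X) ▷ S.x b)
            ≫ (α_ (S.F.map X) (S.ψ.app b) (S.x b)).hom))
          ⊗≫ (star2 (S.ψ.natur X) ▷ (S.ψ.app b ≫ S.x b))
          ⊗≫ (S.F.map X ◁ ((S.ψ.app b ◁ S.rcell b) ≫ S.rcell b))
          ⊗≫ 𝟙 (S.F.map X ≫ S.x b) := by
        bicategory
    _ = (S.ψ.app a ◁ ((α_ (S.ψ.app a) (S.F.map X) (S.x b)).inv
            ≫ (star2 (S.ψ.natur X) ▷ S.x b)
            ≫ (α_ (S.F.map X) (S.ψ.app b) (S.x b)).hom))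
          ⊗≫ (star2 (S.ψ.natur X) ▷ (S.ψ.app b ≫ S.x b))
          ⊗≫ (S.F.map X ◁ ((α_ (S.ψ.app b) (S.ψ.app b) (S.x b)).inv
                ≫ (S.mm b ▷ S.x b) ≫ S.rcell b))
          ⊗≫ 𝟙 (S.F.map X ≫ S.x b) := by
        rw [S.r2_mod b]
    _ = (α_ (S.ψ.app a) (S.ψ.app a) (S.F.map X ≫ S.x b)).inv
          ⊗≫ (((α_ (S.ψ.app a) (S.ψ.app a) (S.F.map X)).hom
                ≫ (S.ψ.app a ◁ star2 (S.ψ.natur X))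
                ≫ (α_ (S.ψ.app a) (S.F.map X) (S.ψ.app b)).inv
                ≫ (star2 (S.ψ.natur X) ▷ S.ψ.app b)
                ≫ (α_ (S.F.map X) (S.ψ.app b) (S.ψ.app b)).hom
                ≫ (S.F.map X ◁ S.mm b)) ▷ S.x b)
          ⊗≫ (S.F.map X ◁ S.rcell b) ⊗≫ 𝟙 (S.F.map X ≫ S.x b) := by
        bicategory
    _ = (α_ (S.ψ.app a) (S.ψ.app a) (S.F.map X ≫ S.x b)).inv
          ⊗≫ (((S.mm a ▷ S.F.map X) ≫ star2 (S.ψ.natur X)) ▷ S.x b)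
          ⊗≫ (S.F.map X ◁ S.rcell b) ⊗≫ 𝟙 (S.F.map X ≫ S.x b) := by
        rw [← S.I_push X]
    _ = _ := by dsimp only [rX]; bicategory

end Setup

namespace Setup

variable {C : Type u₁} {D : Type u₂}
variable [Bicategory.{w₁, v₁} C] [Bicategory.Strict C] [CStarStruct C]
variable [Bicategory.{w₂, v₂} D] [Bicategory.Strict D] [CStarStruct D]
variable (S : Setup C D)

lemma mstar_istar (a : C) :
    star2 (S.mm a) ≫ (star2 (S.ii a) ▷ S.ψ.app a) = (λ_ (S.ψ.app a)).inv := by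
  have h := congrArg star2 (S.hQ_unit_l a)
  simpa using h

lemma mstar_istar_r (a : C) :
    star2 (S.mm a) ≫ (S.ψ.app a ◁ star2 (S.ii a)) = (ρ_ (S.ψ.app a)).inv := by
  have h := congrArg star2 (S.hQ_unit_r a)
  simpa using h

lemma alg2 (a : C) :
    star2 (S.mm a) ≫ ((star2 (S.ii a) ≫ S.ii a) ▷ S.ψ.app a)
        ≫ (star2 (S.mm a) ▷ S.ψ.app a)
        ≫ (α_ (S.ψ.app a) (S.ψ.app a) (S.ψ.app a)).hom ≫ (S.ψ.app a ◁ S.mm a)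
      = star2 (S.mm a) := by
  rw [← S.hQ_frob a]
  calc star2 (S.mm a) ≫ ((star2 (S.ii a) ≫ S.ii a) ▷ S.ψ.app a)
        ≫ S.mm a ≫ star2 (S.mm a)
      = (star2 (S.mm a) ≫ (star2 (S.ii a) ▷ S.ψ.app a))
          ≫ ((S.ii a ▷ S.ψ.app a) ≫ S.mm a) ≫ star2 (S.mm a) := by
        simp only [Bicategory.comp_whiskerRight, Category.assoc]
    _ = (λ_ (S.ψ.app a)).inv ≫ (λ_ (S.ψ.app a)).hom ≫ star2 (S.mm a) := by
        rw [S.mstar_istar a, S.hQ_unit_l a]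
    _ = star2 (S.mm a) := by simp

lemma alg3 (b : C) :
    (star2 (S.mm b) ▷ S.ψ.app b)
        ≫ (α_ (S.ψ.app b) (S.ψ.app b) (S.ψ.app b)).hom
        ≫ (S.ψ.app b ◁ (S.mm b ≫ star2 (S.ii b) ≫ S.ii b)) ≫ S.mm b
      = S.mm b := by
  calc (star2 (S.mm b) ▷ S.ψ.app b)
        ≫ (α_ (S.ψ.app b) (S.ψ.app b) (S.ψ.app b)).hom
        ≫ (S.ψ.app b ◁ (S.mm b ≫ star2 (S.ii b) ≫ S.ii b)) ≫ S.mm b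
      = ((star2 (S.mm b) ▷ S.ψ.app b)
          ≫ (α_ (S.ψ.app b) (S.ψ.app b) (S.ψ.app b)).hom
          ≫ (S.ψ.app b ◁ S.mm b))
          ≫ ((S.ψ.app b ◁ star2 (S.ii b)) ≫ (S.ψ.app b ◁ S.ii b)) ≫ S.mm b := by
        simp only [Bicategory.whiskerLeft_comp, Category.assoc]
    _ = (S.mm b ≫ star2 (S.mm b)) ≫ (S.ψ.app b ◁ star2 (S.ii b))
          ≫ ((S.ψ.app b ◁ S.ii b) ≫ S.mm b) := by
        rw [← S.hQ_frob b]; simp only [Category.assoc]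
    _ = S.mm b ≫ (star2 (S.mm b) ≫ (S.ψ.app b ◁ star2 (S.ii b)))
          ≫ (ρ_ (S.ψ.app b)).hom := by
        rw [S.hQ_unit_r b]; simp only [Category.assoc]
    _ = S.mm b := by rw [S.mstar_istar_r b]; simp

end Setup

namespace Setup

variable {C : Type u₁} {D : Type u₂}
variable [Bicategory.{w₁, v₁} C] [Bicategory.Strict C] [CStarStruct C]
variable [Bicategory.{w₂, v₂} D] [Bicategory.Strict D] [CStarStruct D]
variable (S : Setup C D)

lemma tcoassoc (a : C) :
    S.tcell a ≫ (S.tcell a ▷ S.ψ.app a)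
      = S.tcell a ≫ (S.xb a ◁ star2 (S.mm a))
          ≫ (α_ (S.xb a) (S.ψ.app a) (S.ψ.app a)).inv := by
  have hR : S.tcell a ≫ (S.xb a ◁ star2 (S.mm a))
        ≫ (α_ (S.xb a) (S.ψ.app a) (S.ψ.app a)).inv
      = (λ_ (S.xb a)).inv
        ⊗≫ (((star2 (S.eps a) ▷ 𝟙 (S.cc a)) ≫ ((S.xb a ≫ S.x a) ◁ star2 (S.eps a))) ▷ S.xb a)
        ⊗≫ (S.xb a ◁ (((S.x a ≫ S.xb a) ◁ S.γ a) ≫ (S.γ a ▷ S.ψ.app a)))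
        ⊗≫ 𝟙 ((S.xb a ≫ S.ψ.app a) ≫ S.ψ.app a) := by
    calc S.tcell a ≫ (S.xb a ◁ star2 (S.mm a))
          ≫ (α_ (S.xb a) (S.ψ.app a) (S.ψ.app a)).inv
        = (λ_ (S.xb a)).inv ≫ (star2 (S.eps a) ▷ S.xb a)
            ≫ (α_ (S.xb a) (S.x a) (S.xb a)).hom
            ≫ (S.xb a ◁ (S.γ a ≫ star2 (S.mm a)))
            ≫ (α_ (S.xb a) (S.ψ.app a) (S.ψ.app a)).inv := by
          dsimp only [tcell]; bicategory
      _ = (λ_ (S.xb a)).inv ≫ (star2 (S.eps a) ▷ S.xb a)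
            ≫ (α_ (S.xb a) (S.x a) (S.xb a)).hom
            ≫ (S.xb a ◁ ((S.x a ◁ S.tcell a)
                ≫ (α_ (S.x a) (S.xb a) (S.ψ.app a)).inv ≫ (S.γ a ▷ S.ψ.app a)))
            ≫ (α_ (S.xb a) (S.ψ.app a) (S.ψ.app a)).inv := by
          rw [S.gamma_mstar a]
      _ = _ := by dsimp only [tcell]; bicategory
  rw [hR]
  dsimp only [tcell]
  simp only [Category.assoc]
  slice_lhs 4 5 => rw [whisker_exchange]
  calc _ = (λ_ (S.xb a)).inv
        ⊗≫ (((𝟙 (S.cc a) ◁ star2 (S.eps a)) ≫ (star2 (S.eps a) ▷ (S.xb a ≫ S.x a))) ▷ S.xb a)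
        ⊗≫ (S.xb a ◁ ((S.γ a ▷ (S.x a ≫ S.xb a)) ≫ (S.ψ.app a ◁ S.γ a)))
        ⊗≫ 𝟙 ((S.xb a ≫ S.ψ.app a) ≫ S.ψ.app a) := by bicategory
    _ = _ := by
        rw [whisker_exchange (star2 (S.eps a)) (star2 (S.eps a)),
          ← whisker_exchange (S.γ a) (S.γ a)]

lemma e_coassoc {a b : C} (X : a ⟶ b) :
    S.eX X ≫ (α_ (S.xb a) (S.F.map X) (S.ψ.app b)).inv ≫ (S.eX X ▷ S.ψ.app b)
        ≫ (α_ (S.xb a) (S.F.map X ≫ S.ψ.app b) (S.ψ.app b)).hom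
      = S.eX X ≫ (S.xb a ◁ (S.F.map X ◁ star2 (S.mm b)))
          ≫ (S.xb a ◁ (α_ (S.F.map X) (S.ψ.app b) (S.ψ.app b)).inv) := by
  calc S.eX X ≫ (α_ (S.xb a) (S.F.map X) (S.ψ.app b)).inv ≫ (S.eX X ▷ S.ψ.app b)
        ≫ (α_ (S.xb a) (S.F.map X ≫ S.ψ.app b) (S.ψ.app b)).hom
      = (S.tcell a ▷ S.F.map X)
          ⊗≫ ((S.xb a ◁ star2 (S.ψ.natur X))
                ≫ (S.tcell a ▷ (S.F.map X ≫ S.ψ.app b)))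
          ⊗≫ (S.xb a ◁ (star2 (S.ψ.natur X) ▷ S.ψ.app b))
          ⊗≫ 𝟙 (S.xb a ≫ (S.F.map X ≫ S.ψ.app b) ≫ S.ψ.app b) := by
        dsimp only [eX]; bicategory
    _ = (S.tcell a ▷ S.F.map X)
          ⊗≫ ((S.tcell a ▷ (S.ψ.app a ≫ S.F.map X))
                ≫ ((S.xb a ≫ S.ψ.app a) ◁ star2 (S.ψ.natur X)))
          ⊗≫ (S.xb a ◁ (star2 (S.ψ.natur X) ▷ S.ψ.app b))
          ⊗≫ 𝟙 (S.xb a ≫ (S.F.map X ≫ S.ψ.app b) ≫ S.ψ.app b) := by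
        rw [whisker_exchange (S.tcell a) (star2 (S.ψ.natur X))]
    _ = ((S.tcell a ≫ (S.tcell a ▷ S.ψ.app a)) ▷ S.F.map X)
          ⊗≫ ((S.xb a ≫ S.ψ.app a) ◁ star2 (S.ψ.natur X))
          ⊗≫ (S.xb a ◁ (star2 (S.ψ.natur X) ▷ S.ψ.app b))
          ⊗≫ 𝟙 (S.xb a ≫ (S.F.map X ≫ S.ψ.app b) ≫ S.ψ.app b) := by
        bicategory
    _ = ((S.tcell a ≫ (S.xb a ◁ star2 (S.mm a))
            ≫ (α_ (S.xb a) (S.ψ.app a) (S.ψ.app a)).inv) ▷ S.F.map X)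
          ⊗≫ ((S.xb a ≫ S.ψ.app a) ◁ star2 (S.ψ.natur X))
          ⊗≫ (S.xb a ◁ (star2 (S.ψ.natur X) ▷ S.ψ.app b))
          ⊗≫ 𝟙 (S.xb a ≫ (S.F.map X ≫ S.ψ.app b) ≫ S.ψ.app b) := by
        rw [S.tcoassoc a]
    _ = (S.tcell a ▷ S.F.map X)
          ⊗≫ (S.xb a ◁ ((star2 (S.mm a) ▷ S.F.map X)
                ≫ (α_ (S.ψ.app a) (S.ψ.app a) (S.F.map X)).hom
                ≫ (S.ψ.app a ◁ star2 (S.ψ.natur X))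
                ≫ (α_ (S.ψ.app a) (S.F.map X) (S.ψ.app b)).inv
                ≫ (star2 (S.ψ.natur X) ▷ S.ψ.app b)
                ≫ (α_ (S.F.map X) (S.ψ.app b) (S.ψ.app b)).hom))
          ⊗≫ 𝟙 (S.xb a ≫ (S.F.map X ≫ S.ψ.app b) ≫ S.ψ.app b) := by
        bicategory
    _ = (S.tcell a ▷ S.F.map X)
          ⊗≫ (S.xb a ◁ (star2 (S.ψ.natur X) ≫ (S.F.map X ◁ star2 (S.mm b))))
          ⊗≫ 𝟙 (S.xb a ≫ (S.F.map X ≫ S.ψ.app b) ≫ S.ψ.app b) := by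
        rw [← S.S_push X]
    _ = _ := by dsimp only [eX]; bicategory

end Setup

namespace Setup

variable {C : Type u₁} {D : Type u₂}
variable [Bicategory.{w₁, v₁} C] [Bicategory.Strict C] [CStarStruct C]
variable [Bicategory.{w₂, v₂} D] [Bicategory.Strict D] [CStarStruct D]
variable (S : Setup C D)

lemma gm2 (a : C) :
    star2 (S.γ a) ≫ (S.x a ◁ S.tcell a)
        ≫ (α_ (S.x a) (S.xb a) (S.ψ.app a)).inv ≫ (S.γ a ▷ S.ψ.app a)
      = star2 (S.mm a) := by
  rw [← S.gamma_mstar a, ← Category.assoc, (S.hγu a).2, Category.id_comp]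

lemma etaAbsorb (a : C) :
    S.η a ≫ (S.x a ◁ ((λ_ (S.xb a)).inv ≫ (star2 (S.eps a) ▷ S.xb a)
          ≫ (α_ (S.xb a) (S.x a) (S.xb a)).hom))
        ≫ (α_ (S.x a) (S.xb a) (S.x a ≫ S.xb a)).inv
        ≫ (star2 (S.η a) ▷ (S.x a ≫ S.xb a)) ≫ (λ_ (S.x a ≫ S.xb a)).hom
      = S.η a := by
  calc S.η a ≫ (S.x a ◁ ((λ_ (S.xb a)).inv ≫ (star2 (S.eps a) ▷ S.xb a)
          ≫ (α_ (S.xb a) (S.x a) (S.xb a)).hom))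
        ≫ (α_ (S.x a) (S.xb a) (S.x a ≫ S.xb a)).inv
        ≫ (star2 (S.η a) ▷ (S.x a ≫ S.xb a)) ≫ (λ_ (S.x a ≫ S.xb a)).hom
      = S.η a ≫ (((ρ_ (S.x a)).inv ≫ (S.x a ◁ star2 (S.eps a))
          ≫ (α_ (S.x a) (S.xb a) (S.x a)).inv
          ≫ (star2 (S.η a) ▷ S.x a) ≫ (λ_ (S.x a)).hom) ▷ S.xb a) := by
        bicategory
    _ = S.η a := by rw [S.zig1star a]; simp

lemma Tq (b : C) :
    (S.ψ.app b ◁ star2 (S.γ b)) ≫ (α_ (S.ψ.app b) (S.x b) (S.xb b)).inv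
        ≫ (S.rcell b ▷ S.xb b) ≫ S.γ b
      = S.mm b := by
  rw [S.rcell_gamma b, ← Category.assoc, ← Bicategory.whiskerLeft_comp, (S.hγu b).2]
  simp

lemma TT_eq (b : C) :
    (ρ_ (S.ψ.app b)).inv ≫ (S.ψ.app b ◁ S.η b)
        ≫ (α_ (S.ψ.app b) (S.x b) (S.xb b)).inv
        ≫ (S.rcell b ▷ S.xb b) ≫ star2 (S.η b)
      = star2 (S.ii b) := by
  rw [S.etastar_eq b]
  rw [reassoc_of% (S.rcell_gamma b)]
  rw [← Bicategory.whiskerLeft_comp_assoc, S.hγi' b, reassoc_of% (S.hQ_unit_r b)]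
  simp

end Setup

namespace Setup

variable {C : Type u₁} {D : Type u₂}
variable [Bicategory.{w₁, v₁} C] [Bicategory.Strict C] [CStarStruct C]
variable [Bicategory.{w₂, v₂} D] [Bicategory.Strict D] [CStarStruct D]
variable (S : Setup C D)

lemma core2 {a b : C} (X : a ⟶ b) :
    ((star2 (S.mm a) ▷ (S.F.map X ≫ S.x b))
        ≫ (α_ (S.ψ.app a) (S.ψ.app a) (S.F.map X ≫ S.x b)).hom
        ≫ (S.ψ.app a ◁ S.rX X))
      ≫ ((star2 (S.ii a) ≫ S.ii a) ▷ (S.F.map X ≫ S.x b))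
      ≫ ((star2 (S.mm a) ▷ (S.F.map X ≫ S.x b))
        ≫ (α_ (S.ψ.app a) (S.ψ.app a) (S.F.map X ≫ S.x b)).hom
        ≫ (S.ψ.app a ◁ S.rX X))
      = (star2 (S.mm a) ▷ (S.F.map X ≫ S.x b))
        ≫ (α_ (S.ψ.app a) (S.ψ.app a) (S.F.map X ≫ S.x b)).hom
        ≫ (S.ψ.app a ◁ S.rX X) := by
  calc _ = (star2 (S.mm a) ▷ (S.F.map X ≫ S.x b))
        ⊗≫ ((S.ψ.app a ◁ S.rX X) ≫ ((star2 (S.ii a) ≫ S.ii a) ▷ (S.F.map X ≫ S.x b)))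
        ⊗≫ (star2 (S.mm a) ▷ (S.F.map X ≫ S.x b))
        ⊗≫ (S.ψ.app a ◁ S.rX X)
        ⊗≫ 𝟙 (S.ψ.app a ≫ S.F.map X ≫ S.x b) := by bicategory
    _ = (star2 (S.mm a) ▷ (S.F.map X ≫ S.x b))
        ⊗≫ (((star2 (S.ii a) ≫ S.ii a) ▷ (S.ψ.app a ≫ S.F.map X ≫ S.x b))
              ≫ (S.ψ.app a ◁ S.rX X))
        ⊗≫ (star2 (S.mm a) ▷ (S.F.map X ≫ S.x b))
        ⊗≫ (S.ψ.app a ◁ S.rX X)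
        ⊗≫ 𝟙 (S.ψ.app a ≫ S.F.map X ≫ S.x b) := by
        rw [whisker_exchange (star2 (S.ii a) ≫ S.ii a) (S.rX X)]
    _ = (star2 (S.mm a) ▷ (S.F.map X ≫ S.x b))
        ⊗≫ ((star2 (S.ii a) ≫ S.ii a) ▷ (S.ψ.app a ≫ S.F.map X ≫ S.x b))
        ⊗≫ ((S.ψ.app a ◁ S.rX X) ≫ (star2 (S.mm a) ▷ (S.F.map X ≫ S.x b)))
        ⊗≫ (S.ψ.app a ◁ S.rX X)
        ⊗≫ 𝟙 (S.ψ.app a ≫ S.F.map X ≫ S.x b) := by bicategory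
    _ = (star2 (S.mm a) ▷ (S.F.map X ≫ S.x b))
        ⊗≫ ((star2 (S.ii a) ≫ S.ii a) ▷ (S.ψ.app a ≫ S.F.map X ≫ S.x b))
        ⊗≫ ((star2 (S.mm a) ▷ (S.ψ.app a ≫ S.F.map X ≫ S.x b))
              ≫ ((S.ψ.app a ≫ S.ψ.app a) ◁ S.rX X))
        ⊗≫ (S.ψ.app a ◁ S.rX X)
        ⊗≫ 𝟙 (S.ψ.app a ≫ S.F.map X ≫ S.x b) := by
        rw [whisker_exchange (star2 (S.mm a)) (S.rX X)]
    _ = (star2 (S.mm a) ▷ (S.F.map X ≫ S.x b))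
        ⊗≫ ((star2 (S.ii a) ≫ S.ii a) ▷ (S.ψ.app a ≫ S.F.map X ≫ S.x b))
        ⊗≫ (star2 (S.mm a) ▷ (S.ψ.app a ≫ S.F.map X ≫ S.x b))
        ⊗≫ (S.ψ.app a ◁ ((S.ψ.app a ◁ S.rX X) ≫ S.rX X))
        ⊗≫ 𝟙 (S.ψ.app a ≫ S.F.map X ≫ S.x b) := by bicategory
    _ = (star2 (S.mm a) ▷ (S.F.map X ≫ S.x b))
        ⊗≫ ((star2 (S.ii a) ≫ S.ii a) ▷ (S.ψ.app a ≫ S.F.map X ≫ S.x b))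
        ⊗≫ (star2 (S.mm a) ▷ (S.ψ.app a ≫ S.F.map X ≫ S.x b))
        ⊗≫ (S.ψ.app a ◁ ((α_ (S.ψ.app a) (S.ψ.app a) (S.F.map X ≫ S.x b)).inv
              ≫ (S.mm a ▷ (S.F.map X ≫ S.x b)) ≫ S.rX X))
        ⊗≫ 𝟙 (S.ψ.app a ≫ S.F.map X ≫ S.x b) := by rw [S.rX_mod X]
    _ = ((star2 (S.mm a) ≫ ((star2 (S.ii a) ≫ S.ii a) ▷ S.ψ.app a)
          ≫ (star2 (S.mm a) ▷ S.ψ.app a)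
          ≫ (α_ (S.ψ.app a) (S.ψ.app a) (S.ψ.app a)).hom
          ≫ (S.ψ.app a ◁ S.mm a)) ▷ (S.F.map X ≫ S.x b))
        ⊗≫ (S.ψ.app a ◁ S.rX X)
        ⊗≫ 𝟙 (S.ψ.app a ≫ S.F.map X ≫ S.x b) := by bicategory
    _ = (star2 (S.mm a) ▷ (S.F.map X ≫ S.x b))
        ⊗≫ (S.ψ.app a ◁ S.rX X)
        ⊗≫ 𝟙 (S.ψ.app a ≫ S.F.map X ≫ S.x b) := by rw [S.alg2 a]
    _ = _ := by bicategory

lemma core3 {a b : C} (X : a ⟶ b) :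
    ((α_ (S.xb a) (S.F.map X) (S.ψ.app b)).inv ≫ (S.eX X ▷ S.ψ.app b)
        ≫ (α_ (S.xb a) (S.F.map X ≫ S.ψ.app b) (S.ψ.app b)).hom
        ≫ (S.xb a ◁ (α_ (S.F.map X) (S.ψ.app b) (S.ψ.app b)).hom)
        ≫ (S.xb a ◁ (S.F.map X ◁ S.mm b)))
      ≫ (S.xb a ◁ (S.F.map X ◁ (star2 (S.ii b) ≫ S.ii b)))
      ≫ ((α_ (S.xb a) (S.F.map X) (S.ψ.app b)).inv ≫ (S.eX X ▷ S.ψ.app b)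
        ≫ (α_ (S.xb a) (S.F.map X ≫ S.ψ.app b) (S.ψ.app b)).hom
        ≫ (S.xb a ◁ (α_ (S.F.map X) (S.ψ.app b) (S.ψ.app b)).hom)
        ≫ (S.xb a ◁ (S.F.map X ◁ S.mm b)))
      = (α_ (S.xb a) (S.F.map X) (S.ψ.app b)).inv ≫ (S.eX X ▷ S.ψ.app b)
        ≫ (α_ (S.xb a) (S.F.map X ≫ S.ψ.app b) (S.ψ.app b)).hom
        ≫ (S.xb a ◁ (α_ (S.F.map X) (S.ψ.app b) (S.ψ.app b)).hom)
        ≫ (S.xb a ◁ (S.F.map X ◁ S.mm b)) := by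
  calc _ = (α_ (S.xb a) (S.F.map X) (S.ψ.app b)).inv
        ⊗≫ (S.eX X ▷ S.ψ.app b)
        ⊗≫ (((S.xb a ≫ S.F.map X) ◁ (S.mm b ≫ star2 (S.ii b) ≫ S.ii b))
              ≫ (S.eX X ▷ S.ψ.app b))
        ⊗≫ ((S.xb a ≫ S.F.map X) ◁ S.mm b)
        ⊗≫ 𝟙 (S.xb a ≫ S.F.map X ≫ S.ψ.app b) := by bicategory
    _ = (α_ (S.xb a) (S.F.map X) (S.ψ.app b)).inv
        ⊗≫ (S.eX X ▷ S.ψ.app b)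
        ⊗≫ ((S.eX X ▷ (S.ψ.app b ≫ S.ψ.app b))
              ≫ ((S.xb a ≫ S.F.map X ≫ S.ψ.app b)
                  ◁ (S.mm b ≫ star2 (S.ii b) ≫ S.ii b)))
        ⊗≫ ((S.xb a ≫ S.F.map X) ◁ S.mm b)
        ⊗≫ 𝟙 (S.xb a ≫ S.F.map X ≫ S.ψ.app b) := by
        rw [whisker_exchange (S.eX X) (S.mm b ≫ star2 (S.ii b) ≫ S.ii b)]
    _ = 𝟙 (S.xb a ≫ S.F.map X ≫ S.ψ.app b)
        ⊗≫ ((S.eX X ≫ (α_ (S.xb a) (S.F.map X) (S.ψ.app b)).inv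
            ≫ (S.eX X ▷ S.ψ.app b)
            ≫ (α_ (S.xb a) (S.F.map X ≫ S.ψ.app b) (S.ψ.app b)).hom) ▷ S.ψ.app b)
        ⊗≫ ((S.xb a ≫ S.F.map X ≫ S.ψ.app b)
              ◁ (S.mm b ≫ star2 (S.ii b) ≫ S.ii b))
        ⊗≫ ((S.xb a ≫ S.F.map X) ◁ S.mm b)
        ⊗≫ 𝟙 (S.xb a ≫ S.F.map X ≫ S.ψ.app b) := by bicategory
    _ = 𝟙 (S.xb a ≫ S.F.map X ≫ S.ψ.app b)
        ⊗≫ ((S.eX X ≫ (S.xb a ◁ (S.F.map X ◁ star2 (S.mm b)))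
            ≫ (S.xb a ◁ (α_ (S.F.map X) (S.ψ.app b) (S.ψ.app b)).inv)) ▷ S.ψ.app b)
        ⊗≫ ((S.xb a ≫ S.F.map X ≫ S.ψ.app b)
              ◁ (S.mm b ≫ star2 (S.ii b) ≫ S.ii b))
        ⊗≫ ((S.xb a ≫ S.F.map X) ◁ S.mm b)
        ⊗≫ 𝟙 (S.xb a ≫ S.F.map X ≫ S.ψ.app b) := by rw [S.e_coassoc X]
    _ = 𝟙 (S.xb a ≫ S.F.map X ≫ S.ψ.app b)
        ⊗≫ (S.eX X ▷ S.ψ.app b)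
        ⊗≫ ((S.xb a ≫ S.F.map X) ◁ ((star2 (S.mm b) ▷ S.ψ.app b)
              ≫ (α_ (S.ψ.app b) (S.ψ.app b) (S.ψ.app b)).hom
              ≫ (S.ψ.app b ◁ (S.mm b ≫ star2 (S.ii b) ≫ S.ii b)) ≫ S.mm b))
        ⊗≫ 𝟙 (S.xb a ≫ S.F.map X ≫ S.ψ.app b) := by bicategory
    _ = 𝟙 (S.xb a ≫ S.F.map X ≫ S.ψ.app b)
        ⊗≫ (S.eX X ▷ S.ψ.app b)
        ⊗≫ ((S.xb a ≫ S.F.map X) ◁ S.mm b)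
        ⊗≫ 𝟙 (S.xb a ≫ S.F.map X ≫ S.ψ.app b) := by rw [S.alg3 b]
    _ = _ := by bicategory

end Setup

/-- A generic sandwich lemma: if `w w' = 1`, `w' w = p` and `p N p = p`,
then `w N w' = 1`. -/
lemma sandwich_id {W : Type*} [CategoryTheory.Category W] {P Q : W}
    (w : P ⟶ Q) (w' : Q ⟶ P) (N p : Q ⟶ Q)
    (h1 : w ≫ w' = 𝟙 P) (h2 : w' ≫ w = p) (hc : p ≫ N ≫ p = p) :
    w ≫ N ≫ w' = 𝟙 P := by
  have hwp : w ≫ p = w := by rw [← h2, ← Category.assoc, h1, Category.id_comp]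
  have hpw' : p ≫ w' = w' := by
    rw [← h2, Category.assoc, h1, Category.comp_id]
  calc w ≫ N ≫ w' = (w ≫ p) ≫ N ≫ (p ≫ w') := by rw [hwp, hpw']
    _ = w ≫ (p ≫ N ≫ p) ≫ w' := by simp only [Category.assoc]
    _ = w ≫ p ≫ w' := by rw [hc]
    _ = 𝟙 P := by rw [hpw', h1]

namespace GData

variable {C : Type u₁} {D : Type u₂}
variable [Bicategory.{w₁, v₁} C] [Bicategory.Strict C] [CStarStruct C]
variable [Bicategory.{w₂, v₂} D] [Bicategory.Strict D] [CStarStruct D]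
variable {S : Setup C D}

lemma u_p (E : GData S) {a b : C} (X : a ⟶ b) : E.u X ≫ S.p X = E.u X := by
  rw [← E.hu_proj X, reassoc_of% (E.hu_isometry X)]

lemma p_ustar (E : GData S) {a b : C} (X : a ⟶ b) :
    S.p X ≫ star2 (E.u X) = star2 (E.u X) := by
  rw [← E.hu_proj X, Category.assoc, E.hu_isometry X, Category.comp_id]

lemma phistar (E : GData S) {a b : C} (X : a ⟶ b) :
    star2 (E.φnat X)
      = (S.x a ◁ E.u X)
        ≫ (α_ (S.x a) (S.xb a) (S.F.map X ≫ S.x b)).inv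
        ≫ (star2 (S.η a) ▷ (S.F.map X ≫ S.x b))
        ≫ (λ_ (S.F.map X ≫ S.x b)).hom := by
  dsimp only [GData.φnat]; simp

lemma phibstar (E : GData S) {a b : C} (X : a ⟶ b) :
    star2 (E.φbnat X)
      = (S.xb a ◁ (ρ_ (S.F.map X)).inv)
        ≫ (S.xb a ◁ (S.F.map X ◁ S.η b))
        ≫ (S.xb a ◁ (α_ (S.F.map X) (S.x b) (S.xb b)).inv)
        ≫ (α_ (S.xb a) (S.F.map X ≫ S.x b) (S.xb b)).inv
        ≫ (star2 (E.u X) ▷ S.xb b) := by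
  dsimp only [GData.φbnat]; simp

/-- `w = (x ◁ u) ∘ (γ ⊠ id)`-style conjugating cell for `φ`. -/
def wcell (E : GData S) {a b : C} (X : a ⟶ b) :
    S.x a ≫ E.G1 X ⟶ S.ψ.app a ≫ S.F.map X ≫ S.x b :=
  (S.x a ◁ E.u X) ≫ (α_ (S.x a) (S.xb a) (S.F.map X ≫ S.x b)).inv
    ≫ (S.γ a ▷ (S.F.map X ≫ S.x b))

lemma wcell_star (E : GData S) {a b : C} (X : a ⟶ b) :
    star2 (E.wcell X)
      = (star2 (S.γ a) ▷ (S.F.map X ≫ S.x b))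
        ≫ (α_ (S.x a) (S.xb a) (S.F.map X ≫ S.x b)).hom
        ≫ (S.x a ◁ star2 (E.u X)) := by
  dsimp only [GData.wcell]; simp

lemma w_wstar (E : GData S) {a b : C} (X : a ⟶ b) :
    E.wcell X ≫ star2 (E.wcell X) = 𝟙 (S.x a ≫ E.G1 X) := by
  rw [E.wcell_star X]
  dsimp only [GData.wcell]
  calc _ = (S.x a ◁ E.u X)
        ≫ (α_ (S.x a) (S.xb a) (S.F.map X ≫ S.x b)).inv
        ≫ ((S.γ a ≫ star2 (S.γ a)) ▷ (S.F.map X ≫ S.x b))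
        ≫ (α_ (S.x a) (S.xb a) (S.F.map X ≫ S.x b)).hom
        ≫ (S.x a ◁ star2 (E.u X)) := by bicategory
    _ = S.x a ◁ (E.u X ≫ star2 (E.u X)) := by rw [(S.hγu a).1]; bicategory
    _ = 𝟙 _ := by rw [E.hu_isometry X]; simp

lemma wstar_w (E : GData S) {a b : C} (X : a ⟶ b) :
    star2 (E.wcell X) ≫ E.wcell X
      = (star2 (S.mm a) ▷ (S.F.map X ≫ S.x b))
        ≫ (α_ (S.ψ.app a) (S.ψ.app a) (S.F.map X ≫ S.x b)).hom
        ≫ (S.ψ.app a ◁ S.rX X) := by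
  rw [E.wcell_star X]
  dsimp only [GData.wcell]
  calc _ = (star2 (S.γ a) ▷ (S.F.map X ≫ S.x b))
        ≫ (α_ (S.x a) (S.xb a) (S.F.map X ≫ S.x b)).hom
        ≫ (S.x a ◁ (star2 (E.u X) ≫ E.u X))
        ≫ (α_ (S.x a) (S.xb a) (S.F.map X ≫ S.x b)).inv
        ≫ (S.γ a ▷ (S.F.map X ≫ S.x b)) := by bicategory
    _ = (star2 (S.γ a) ▷ (S.F.map X ≫ S.x b))
        ≫ (α_ (S.x a) (S.xb a) (S.F.map X ≫ S.x b)).hom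
        ≫ (S.x a ◁ S.p X)
        ≫ (α_ (S.x a) (S.xb a) (S.F.map X ≫ S.x b)).inv
        ≫ (S.γ a ▷ (S.F.map X ≫ S.x b)) := by rw [E.hu_proj X]
    _ = (star2 (S.γ a) ▷ (S.F.map X ≫ S.x b))
        ⊗≫ (S.x a ◁ (S.tcell a ▷ (S.F.map X ≫ S.x b)))
        ⊗≫ (((S.x a ≫ S.xb a) ◁ S.rX X) ≫ (S.γ a ▷ (S.F.map X ≫ S.x b)))
        ⊗≫ 𝟙 (S.ψ.app a ≫ S.F.map X ≫ S.x b) := by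
        rw [S.p_decomp X]; bicategory
    _ = (star2 (S.γ a) ▷ (S.F.map X ≫ S.x b))
        ⊗≫ (S.x a ◁ (S.tcell a ▷ (S.F.map X ≫ S.x b)))
        ⊗≫ ((S.γ a ▷ (S.ψ.app a ≫ S.F.map X ≫ S.x b)) ≫ (S.ψ.app a ◁ S.rX X))
        ⊗≫ 𝟙 (S.ψ.app a ≫ S.F.map X ≫ S.x b) := by
        rw [whisker_exchange (S.γ a) (S.rX X)]
    _ = ((star2 (S.γ a) ≫ (S.x a ◁ S.tcell a)
          ≫ (α_ (S.x a) (S.xb a) (S.ψ.app a)).inv ≫ (S.γ a ▷ S.ψ.app a))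
            ▷ (S.F.map X ≫ S.x b))
        ⊗≫ (S.ψ.app a ◁ S.rX X)
        ⊗≫ 𝟙 (S.ψ.app a ≫ S.F.map X ≫ S.x b) := by bicategory
    _ = (star2 (S.mm a) ▷ (S.F.map X ≫ S.x b))
        ⊗≫ (S.ψ.app a ◁ S.rX X)
        ⊗≫ 𝟙 (S.ψ.app a ≫ S.F.map X ≫ S.x b) := by rw [S.gm2 a]
    _ = _ := by bicategory

/-- The conjugating cell for `φ̄`. -/
def vcell (E : GData S) {a b : C} (X : a ⟶ b) :
    E.G1 X ≫ S.xb b ⟶ S.xb a ≫ S.F.map X ≫ S.ψ.app b :=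
  (E.u X ▷ S.xb b) ≫ (α_ (S.xb a) (S.F.map X ≫ S.x b) (S.xb b)).hom
    ≫ (S.xb a ◁ (α_ (S.F.map X) (S.x b) (S.xb b)).hom)
    ≫ (S.xb a ◁ (S.F.map X ◁ S.γ b))

lemma vcell_star (E : GData S) {a b : C} (X : a ⟶ b) :
    star2 (E.vcell X)
      = (S.xb a ◁ (S.F.map X ◁ star2 (S.γ b)))
        ≫ (S.xb a ◁ (α_ (S.F.map X) (S.x b) (S.xb b)).inv)
        ≫ (α_ (S.xb a) (S.F.map X ≫ S.x b) (S.xb b)).inv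
        ≫ (star2 (E.u X) ▷ S.xb b) := by
  dsimp only [GData.vcell]; simp

lemma v_vstar (E : GData S) {a b : C} (X : a ⟶ b) :
    E.vcell X ≫ star2 (E.vcell X) = 𝟙 (E.G1 X ≫ S.xb b) := by
  rw [E.vcell_star X]
  dsimp only [GData.vcell]
  calc _ = (E.u X ▷ S.xb b)
        ≫ (α_ (S.xb a) (S.F.map X ≫ S.x b) (S.xb b)).hom
        ≫ (S.xb a ◁ (α_ (S.F.map X) (S.x b) (S.xb b)).hom)
        ≫ (S.xb a ◁ (S.F.map X ◁ (S.γ b ≫ star2 (S.γ b))))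
        ≫ (S.xb a ◁ (α_ (S.F.map X) (S.x b) (S.xb b)).inv)
        ≫ (α_ (S.xb a) (S.F.map X ≫ S.x b) (S.xb b)).inv
        ≫ (star2 (E.u X) ▷ S.xb b) := by bicategory
    _ = (E.u X ≫ star2 (E.u X)) ▷ S.xb b := by rw [(S.hγu b).1]; bicategory
    _ = 𝟙 _ := by rw [E.hu_isometry X]; simp

lemma vstar_v (E : GData S) {a b : C} (X : a ⟶ b) :
    star2 (E.vcell X) ≫ E.vcell X
      = (α_ (S.xb a) (S.F.map X) (S.ψ.app b)).inv ≫ (S.eX X ▷ S.ψ.app b)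
        ≫ (α_ (S.xb a) (S.F.map X ≫ S.ψ.app b) (S.ψ.app b)).hom
        ≫ (S.xb a ◁ (α_ (S.F.map X) (S.ψ.app b) (S.ψ.app b)).hom)
        ≫ (S.xb a ◁ (S.F.map X ◁ S.mm b)) := by
  rw [E.vcell_star X]
  dsimp only [GData.vcell]
  calc _ = (S.xb a ◁ (S.F.map X ◁ star2 (S.γ b)))
        ≫ (S.xb a ◁ (α_ (S.F.map X) (S.x b) (S.xb b)).inv)
        ≫ (α_ (S.xb a) (S.F.map X ≫ S.x b) (S.xb b)).inv
        ≫ ((star2 (E.u X) ≫ E.u X) ▷ S.xb b)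
        ≫ (α_ (S.xb a) (S.F.map X ≫ S.x b) (S.xb b)).hom
        ≫ (S.xb a ◁ (α_ (S.F.map X) (S.x b) (S.xb b)).hom)
        ≫ (S.xb a ◁ (S.F.map X ◁ S.γ b)) := by bicategory
    _ = (S.xb a ◁ (S.F.map X ◁ star2 (S.γ b)))
        ≫ (S.xb a ◁ (α_ (S.F.map X) (S.x b) (S.xb b)).inv)
        ≫ (α_ (S.xb a) (S.F.map X ≫ S.x b) (S.xb b)).inv
        ≫ (S.p X ▷ S.xb b)
        ≫ (α_ (S.xb a) (S.F.map X ≫ S.x b) (S.xb b)).hom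
        ≫ (S.xb a ◁ (α_ (S.F.map X) (S.x b) (S.xb b)).hom)
        ≫ (S.xb a ◁ (S.F.map X ◁ S.γ b)) := by rw [E.hu_proj X]
    _ = 𝟙 (S.xb a ≫ S.F.map X ≫ S.ψ.app b)
        ⊗≫ (((S.xb a ≫ S.F.map X) ◁ star2 (S.γ b))
              ≫ (S.eX X ▷ (S.x b ≫ S.xb b)))
        ⊗≫ ((S.xb a ≫ S.F.map X)
              ◁ ((α_ (S.ψ.app b) (S.x b) (S.xb b)).inv
                  ≫ (S.rcell b ▷ S.xb b) ≫ S.γ b))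
        ⊗≫ 𝟙 (S.xb a ≫ S.F.map X ≫ S.ψ.app b) := by
        rw [S.p_decomp X]; dsimp only [Setup.eX, Setup.rX]; bicategory
    _ = 𝟙 (S.xb a ≫ S.F.map X ≫ S.ψ.app b)
        ⊗≫ ((S.eX X ▷ S.ψ.app b)
              ≫ ((S.xb a ≫ S.F.map X ≫ S.ψ.app b) ◁ star2 (S.γ b)))
        ⊗≫ ((S.xb a ≫ S.F.map X)
              ◁ ((α_ (S.ψ.app b) (S.x b) (S.xb b)).inv
                  ≫ (S.rcell b ▷ S.xb b) ≫ S.γ b))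
        ⊗≫ 𝟙 (S.xb a ≫ S.F.map X ≫ S.ψ.app b) := by
        rw [whisker_exchange (S.eX X) (star2 (S.γ b))]
    _ = 𝟙 (S.xb a ≫ S.F.map X ≫ S.ψ.app b)
        ⊗≫ (S.eX X ▷ S.ψ.app b)
        ⊗≫ ((S.xb a ≫ S.F.map X)
              ◁ ((S.ψ.app b ◁ star2 (S.γ b))
                  ≫ (α_ (S.ψ.app b) (S.x b) (S.xb b)).inv
                  ≫ (S.rcell b ▷ S.xb b) ≫ S.γ b))
        ⊗≫ 𝟙 (S.xb a ≫ S.F.map X ≫ S.ψ.app b) := by bicategory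
    _ = 𝟙 (S.xb a ≫ S.F.map X ≫ S.ψ.app b)
        ⊗≫ (S.eX X ▷ S.ψ.app b)
        ⊗≫ ((S.xb a ≫ S.F.map X) ◁ S.mm b)
        ⊗≫ 𝟙 (S.xb a ≫ S.F.map X ≫ S.ψ.app b) := by rw [S.Tq b]
    _ = _ := by bicategory

end GData

/-- In the standing setup with `G`, `u_X`, `φ` and `φ̄` as defined,
for every 1-cell `X ∈ C₁(a,b)` the 2-cells
`φ_X : x_b ⊠ F(X) ⟶ G(X) ⊠ x_a` and `φ̄_X : x̄_b ⊠ G(X) ⟶ F(X) ⊠ x̄_a`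
are unitary. -/
theorem phi_phibar_unitary
    {C : Type u₁} {D : Type u₂}
    [Bicategory.{w₁, v₁} C] [Bicategory.Strict C] [CStarStruct C]
    [Bicategory.{w₂, v₂} D] [Bicategory.Strict D] [CStarStruct D]
    (S : Setup C D) (E : GData S) {a b : C} (X : a ⟶ b) :
    IsUnitary (E.φnat X) ∧ IsUnitary (E.φbnat X) := by
  have part1 : E.φnat X ≫ star2 (E.φnat X) = 𝟙 (S.F.map X ≫ S.x b) := by
    calc E.φnat X ≫ star2 (E.φnat X)
        = (λ_ (S.F.map X ≫ S.x b)).inv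
            ≫ (S.η a ▷ (S.F.map X ≫ S.x b))
            ≫ (α_ (S.x a) (S.xb a) (S.F.map X ≫ S.x b)).hom
            ≫ (S.x a ◁ (star2 (E.u X) ≫ E.u X))
            ≫ (α_ (S.x a) (S.xb a) (S.F.map X ≫ S.x b)).inv
            ≫ (star2 (S.η a) ▷ (S.F.map X ≫ S.x b))
            ≫ (λ_ (S.F.map X ≫ S.x b)).hom := by
          rw [E.phistar X]; dsimp only [GData.φnat]; bicategory
      _ = (λ_ (S.F.map X ≫ S.x b)).inv
            ≫ (S.η a ▷ (S.F.map X ≫ S.x b))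
            ≫ (α_ (S.x a) (S.xb a) (S.F.map X ≫ S.x b)).hom
            ≫ (S.x a ◁ S.p X)
            ≫ (α_ (S.x a) (S.xb a) (S.F.map X ≫ S.x b)).inv
            ≫ (star2 (S.η a) ▷ (S.F.map X ≫ S.x b))
            ≫ (λ_ (S.F.map X ≫ S.x b)).hom := by rw [E.hu_proj X]
      _ = (λ_ (S.F.map X ≫ S.x b)).inv
            ⊗≫ (S.η a ▷ (S.F.map X ≫ S.x b))
            ⊗≫ (S.x a ◁ (star2 (S.eps a) ▷ (S.xb a ≫ S.F.map X ≫ S.x b)))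
            ⊗≫ (((S.x a ≫ S.xb a)
                    ◁ ((S.γ a ▷ (S.F.map X ≫ S.x b)) ≫ S.rX X))
                  ≫ (star2 (S.η a) ▷ (S.F.map X ≫ S.x b)))
            ⊗≫ 𝟙 (S.F.map X ≫ S.x b) := by
          rw [S.p_decomp X]; dsimp only [Setup.tcell]; bicategory
      _ = (λ_ (S.F.map X ≫ S.x b)).inv
            ⊗≫ (S.η a ▷ (S.F.map X ≫ S.x b))
            ⊗≫ (S.x a ◁ (star2 (S.eps a) ▷ (S.xb a ≫ S.F.map X ≫ S.x b)))
            ⊗≫ ((star2 (S.η a) ▷ ((S.x a ≫ S.xb a) ≫ S.F.map X ≫ S.x b))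
                  ≫ (𝟙 (S.F.obj a)
                      ◁ ((S.γ a ▷ (S.F.map X ≫ S.x b)) ≫ S.rX X)))
            ⊗≫ 𝟙 (S.F.map X ≫ S.x b) := by
          rw [whisker_exchange (star2 (S.η a))
            ((S.γ a ▷ (S.F.map X ≫ S.x b)) ≫ S.rX X)]
      _ = (λ_ (S.F.map X ≫ S.x b)).inv
            ⊗≫ ((S.η a ≫ (S.x a ◁ ((λ_ (S.xb a)).inv ≫ (star2 (S.eps a) ▷ S.xb a)
                    ≫ (α_ (S.xb a) (S.x a) (S.xb a)).hom))
                  ≫ (α_ (S.x a) (S.xb a) (S.x a ≫ S.xb a)).inv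
                  ≫ (star2 (S.η a) ▷ (S.x a ≫ S.xb a))
                  ≫ (λ_ (S.x a ≫ S.xb a)).hom) ▷ (S.F.map X ≫ S.x b))
            ⊗≫ (𝟙 (S.F.obj a) ◁ ((S.γ a ▷ (S.F.map X ≫ S.x b)) ≫ S.rX X))
            ⊗≫ 𝟙 (S.F.map X ≫ S.x b) := by bicategory
      _ = (λ_ (S.F.map X ≫ S.x b)).inv
            ⊗≫ (S.η a ▷ (S.F.map X ≫ S.x b))
            ⊗≫ (𝟙 (S.F.obj a) ◁ ((S.γ a ▷ (S.F.map X ≫ S.x b)) ≫ S.rX X))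
            ⊗≫ 𝟙 (S.F.map X ≫ S.x b) := by rw [S.etaAbsorb a]
      _ = (λ_ (S.F.map X ≫ S.x b)).inv
            ≫ ((S.η a ≫ S.γ a) ▷ (S.F.map X ≫ S.x b)) ≫ S.rX X := by bicategory
      _ = (λ_ (S.F.map X ≫ S.x b)).inv
            ≫ (S.ii a ▷ (S.F.map X ≫ S.x b)) ≫ S.rX X := by rw [S.hγi' a]
      _ = (λ_ (S.F.map X ≫ S.x b)).inv
            ⊗≫ (((S.ii a ▷ S.F.map X) ≫ star2 (S.ψ.natur X)) ▷ S.x b)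
            ⊗≫ (S.F.map X ◁ S.rcell b)
            ⊗≫ 𝟙 (S.F.map X ≫ S.x b) := by dsimp only [Setup.rX]; bicategory
      _ = (λ_ (S.F.map X ≫ S.x b)).inv
            ⊗≫ (((λ_ (S.F.map X)).hom ≫ (ρ_ (S.F.map X)).inv
                  ≫ (S.F.map X ◁ S.ii b)) ▷ S.x b)
            ⊗≫ (S.F.map X ◁ S.rcell b)
            ⊗≫ 𝟙 (S.F.map X ≫ S.x b) := by rw [S.ibar X]
      _ = S.F.map X ◁ ((λ_ (S.x b)).inv
            ≫ ((S.ii b ≫ star2 (S.γ b)) ▷ S.x b)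
            ≫ (α_ (S.x b) (S.xb b) (S.x b)).hom
            ≫ (S.x b ◁ S.eps b) ≫ (ρ_ (S.x b)).hom) := by
          dsimp only [Setup.rcell]; bicategory
      _ = S.F.map X ◁ ((λ_ (S.x b)).inv
            ≫ (S.η b ▷ S.x b)
            ≫ (α_ (S.x b) (S.xb b) (S.x b)).hom
            ≫ (S.x b ◁ S.eps b) ≫ (ρ_ (S.x b)).hom) := by rw [S.i_gamstar b]
      _ = 𝟙 (S.F.map X ≫ S.x b) := by rw [(S.hdual b).1]; simp
  have part2 : star2 (E.φnat X) ≫ E.φnat X = 𝟙 (S.x a ≫ E.G1 X) := by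
    calc star2 (E.φnat X) ≫ E.φnat X
        = E.wcell X
            ≫ ((star2 (S.ii a) ≫ S.ii a) ▷ (S.F.map X ≫ S.x b))
            ≫ star2 (E.wcell X) := by
          rw [E.phistar X, E.wcell_star X]; dsimp only [GData.φnat, GData.wcell]
          rw [S.etastar_eq a, S.eta_eq a]; bicategory
      _ = 𝟙 (S.x a ≫ E.G1 X) :=
          sandwich_id _ _ _ _ (E.w_wstar X) (E.wstar_w X) (S.core2 X)
  have part3a : E.φbnat X ≫ star2 (E.φbnat X) = 𝟙 (E.G1 X ≫ S.xb b) := by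
    calc E.φbnat X ≫ star2 (E.φbnat X)
        = E.vcell X
            ≫ (S.xb a ◁ (S.F.map X ◁ (star2 (S.ii b) ≫ S.ii b)))
            ≫ star2 (E.vcell X) := by
          rw [E.phibstar X, E.vcell_star X]; dsimp only [GData.φbnat, GData.vcell]
          rw [S.etastar_eq b, S.eta_eq b]; bicategory
      _ = 𝟙 (E.G1 X ≫ S.xb b) :=
          sandwich_id _ _ _ _ (E.v_vstar X) (E.vstar_v X) (S.core3 X)
  have part3b : star2 (E.φbnat X) ≫ E.φbnat X = 𝟙 (S.xb a ≫ S.F.map X) := by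
    calc star2 (E.φbnat X) ≫ E.φbnat X
        = (S.xb a ◁ (ρ_ (S.F.map X)).inv)
            ≫ (S.xb a ◁ (S.F.map X ◁ S.η b))
            ≫ (S.xb a ◁ (α_ (S.F.map X) (S.x b) (S.xb b)).inv)
            ≫ (α_ (S.xb a) (S.F.map X ≫ S.x b) (S.xb b)).inv
            ≫ ((star2 (E.u X) ≫ E.u X) ▷ S.xb b)
            ≫ (α_ (S.xb a) (S.F.map X ≫ S.x b) (S.xb b)).hom
            ≫ (S.xb a ◁ (α_ (S.F.map X) (S.x b) (S.xb b)).hom)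
            ≫ (S.xb a ◁ (S.F.map X ◁ star2 (S.η b)))
            ≫ (S.xb a ◁ (ρ_ (S.F.map X)).hom) := by
          rw [E.phibstar X]; dsimp only [GData.φbnat]; bicategory
      _ = (S.xb a ◁ (ρ_ (S.F.map X)).inv)
            ≫ (S.xb a ◁ (S.F.map X ◁ S.η b))
            ≫ (S.xb a ◁ (α_ (S.F.map X) (S.x b) (S.xb b)).inv)
            ≫ (α_ (S.xb a) (S.F.map X ≫ S.x b) (S.xb b)).inv
            ≫ (S.p X ▷ S.xb b)
            ≫ (α_ (S.xb a) (S.F.map X ≫ S.x b) (S.xb b)).hom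
            ≫ (S.xb a ◁ (α_ (S.F.map X) (S.x b) (S.xb b)).hom)
            ≫ (S.xb a ◁ (S.F.map X ◁ star2 (S.η b)))
            ≫ (S.xb a ◁ (ρ_ (S.F.map X)).hom) := by rw [E.hu_proj X]
      _ = 𝟙 (S.xb a ≫ S.F.map X)
            ⊗≫ ((((S.xb a ≫ S.F.map X) ◁ S.η b)
                  ≫ (S.eX X ▷ (S.x b ≫ S.xb b))))
            ⊗≫ ((S.xb a ≫ S.F.map X)
                  ◁ ((α_ (S.ψ.app b) (S.x b) (S.xb b)).inv
                      ≫ (S.rcell b ▷ S.xb b) ≫ star2 (S.η b)))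
            ⊗≫ 𝟙 (S.xb a ≫ S.F.map X) := by
          rw [S.p_decomp X]; dsimp only [Setup.eX, Setup.rX]; bicategory
      _ = 𝟙 (S.xb a ≫ S.F.map X)
            ⊗≫ (((S.eX X ▷ 𝟙 (S.F.obj b))
                  ≫ ((S.xb a ≫ S.F.map X ≫ S.ψ.app b) ◁ S.η b)))
            ⊗≫ ((S.xb a ≫ S.F.map X)
                  ◁ ((α_ (S.ψ.app b) (S.x b) (S.xb b)).inv
                      ≫ (S.rcell b ▷ S.xb b) ≫ star2 (S.η b)))
            ⊗≫ 𝟙 (S.xb a ≫ S.F.map X) := by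
          rw [whisker_exchange (S.eX X) (S.η b)]
      _ = S.eX X
            ⊗≫ ((S.xb a ≫ S.F.map X)
                  ◁ ((ρ_ (S.ψ.app b)).inv ≫ (S.ψ.app b ◁ S.η b)
                      ≫ (α_ (S.ψ.app b) (S.x b) (S.xb b)).inv
                      ≫ (S.rcell b ▷ S.xb b) ≫ star2 (S.η b)))
            ⊗≫ 𝟙 (S.xb a ≫ S.F.map X) := by bicategory
      _ = S.eX X
            ⊗≫ ((S.xb a ≫ S.F.map X) ◁ star2 (S.ii b))
            ⊗≫ 𝟙 (S.xb a ≫ S.F.map X) := by rw [S.TT_eq b]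
      _ = (S.tcell a ▷ S.F.map X)
            ⊗≫ (S.xb a ◁ (star2 (S.ψ.natur X) ≫ (S.F.map X ◁ star2 (S.ii b))))
            ⊗≫ 𝟙 (S.xb a ≫ S.F.map X) := by dsimp only [Setup.eX]; bicategory
      _ = (S.tcell a ▷ S.F.map X)
            ⊗≫ (S.xb a ◁ ((star2 (S.ii a) ▷ S.F.map X)
                  ≫ (λ_ (S.F.map X)).hom ≫ (ρ_ (S.F.map X)).inv))
            ⊗≫ 𝟙 (S.xb a ≫ S.F.map X) := by rw [S.istar_push X]
      _ = (((λ_ (S.xb a)).inv ≫ (star2 (S.eps a) ▷ S.xb a)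
              ≫ (α_ (S.xb a) (S.x a) (S.xb a)).hom
              ≫ (S.xb a ◁ (S.γ a ≫ star2 (S.ii a)))) ▷ S.F.map X)
            ⊗≫ 𝟙 (S.xb a ≫ S.F.map X) := by dsimp only [Setup.tcell]; bicategory
      _ = (((λ_ (S.xb a)).inv ≫ (star2 (S.eps a) ▷ S.xb a)
              ≫ (α_ (S.xb a) (S.x a) (S.xb a)).hom
              ≫ (S.xb a ◁ star2 (S.η a))) ▷ S.F.map X)
            ⊗≫ 𝟙 (S.xb a ≫ S.F.map X) := by rw [S.gam_istar a]
      _ = (((λ_ (S.xb a)).inv ≫ (star2 (S.eps a) ▷ S.xb a)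
              ≫ (α_ (S.xb a) (S.x a) (S.xb a)).hom
              ≫ (S.xb a ◁ star2 (S.η a)) ≫ (ρ_ (S.xb a)).hom) ▷ S.F.map X)
            ⊗≫ 𝟙 (S.xb a ≫ S.F.map X) := by bicategory
      _ = 𝟙 (S.xb a ≫ S.F.map X) := by rw [S.zig2star a]; bicategory
  exact ⟨⟨part1, part2⟩, ⟨part3a, part3b⟩⟩
end
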